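/- arXiv:2310.16780 — 3 statements merged into one kernel-verified Lean document; each statement's English description precedes it below -/
import Mathlib

section
/- Let δ > 0 and let f : ℝ → ℂ be essentially bounded (with respect to Lebesgue measure). If the limit lim_{M→∞} (1/M) ∫₀^M f(t) dt exists, then the limit lim_{M→∞} (1/M) ∫₀^M f(t^δ) dt exists and the two limits are equal. -/
open MeasureTheory Filter Set Real
open scoped ENNReal NNReal

lemma rpow_le_max (N e u : ℝ) (hu1 : 1 ≤ u) (huN : u ≤ N) : u ^ e ≤ max 1 (N ^ e) := by
  rcases le_or_gt 0 e with he | he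
  · exact le_max_of_le_right (Real.rpow_le_rpow (by linarith) huN he)
  · exact le_max_of_le_left (Real.rpow_le_one_of_one_le_of_nonpos hu1 he.le)

lemma ibp (g : ℝ → ℂ) (hg : Measurable g) (C : ℝ) (hC0 : 0 ≤ C) (hC : ∀ u, ‖g u‖ ≤ C)
    (γ N : ℝ) (hN : 1 ≤ N) :
    ∫ u in Set.Ioc 1 N, (u ^ (γ-1)) • g u
      = (N ^ (γ-1)) • (∫ u in Set.Ioc 1 N, g u)
        - (γ-1) • ∫ s in Set.Ioc 1 N, (s ^ (γ-2)) • (∫ u in Set.Ioc 1 s, g u) := by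
  -- integrability of g on finite-measure sets
  have hgi : ∀ a b : ℝ, IntegrableOn g (Set.Ioc a b) := by
    intro a b
    refine Integrable.mono' (g := fun _ => C) ?_ (hg.aestronglyMeasurable.restrict)
      (Eventually.of_forall hC)
    exact integrableOn_const (by rw [Real.volume_Ioc]; exact ENNReal.ofReal_ne_top)
  -- Step 1 : the weight identity
  have hw : ∀ u : ℝ, 0 < u → u ≤ N →
      (∫ s in Set.Ioc u N, ((γ-1) * s ^ (γ-2))) = N ^ (γ-1) - u ^ (γ-1) := by
    intro u hu0 huN
    have hsub : Set.uIcc u N ⊆ Set.Ioi 0 := by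
      rw [Set.uIcc_of_le huN]; intro s hs; exact lt_of_lt_of_le hu0 hs.1
    have hderiv : ∀ s ∈ Set.uIcc u N, HasDerivAt (fun x : ℝ => x ^ (γ-1)) ((γ-1) * s ^ (γ-2)) s := by
      intro s hs
      have h := Real.hasDerivAt_rpow_const (x := s) (p := γ-1) (Or.inl (hsub hs).ne')
      have he : γ - 1 - 1 = γ - 2 := by ring
      rwa [he] at h
    have hcont : ContinuousOn (fun s : ℝ => (γ-1) * s ^ (γ-2)) (Set.uIcc u N) :=
      continuousOn_const.mul (fun s hs =>
        (Real.continuousAt_rpow_const s _ (Or.inl (hsub hs).ne')).continuousWithinAt)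
    have h := intervalIntegral.integral_eq_sub_of_hasDerivAt hderiv hcont.intervalIntegrable
    rwa [intervalIntegral.integral_of_le huN] at h
  -- the kernel
  set k : ℝ → ℝ → ℂ :=
    fun u s => if 1 < u ∧ u ≤ N ∧ u < s ∧ s ≤ N then ((γ-1) * s ^ (γ-2)) • g u else 0 with hk
  have huk : Measurable (Function.uncurry k) := by
    have hkeq : Function.uncurry k =
        Set.indicator {p : ℝ × ℝ | 1 < p.1 ∧ p.1 ≤ N ∧ p.1 < p.2 ∧ p.2 ≤ N}
          (fun p => ((γ-1) * p.2 ^ (γ-2)) • g p.1) := by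
      funext p
      simp only [Function.uncurry, hk, Set.indicator_apply, Set.mem_setOf_eq]
    have hS : MeasurableSet {p : ℝ × ℝ | 1 < p.1 ∧ p.1 ≤ N ∧ p.1 < p.2 ∧ p.2 ≤ N} := by
      refine MeasurableSet.inter (measurableSet_lt measurable_const measurable_fst)
        (MeasurableSet.inter (measurableSet_le measurable_fst measurable_const)
          (MeasurableSet.inter (measurableSet_lt measurable_fst measurable_snd)
            (measurableSet_le measurable_snd measurable_const)))
    rw [hkeq]
    exact Measurable.indicator
      ((measurable_const.mul (measurable_snd.pow measurable_const)).smul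
        (hg.comp measurable_fst)) hS
  -- integrability of the kernel
  have hki : Integrable (Function.uncurry k) (volume.prod volume) := by
    set D : ℝ := |γ-1| * max 1 (N ^ (γ-2)) * C with hD
    have hD0 : 0 ≤ D := by positivity
    have hdom : Integrable ((Set.Icc (1:ℝ) N ×ˢ Set.Icc (1:ℝ) N).indicator fun _ => D)
        (volume.prod volume) := by
      rw [integrable_indicator_iff (measurableSet_Icc.prod measurableSet_Icc)]
      refine integrableOn_const ?_
      rw [Measure.prod_prod, Real.volume_Icc]
      exact (ENNReal.mul_lt_top ENNReal.ofReal_lt_top ENNReal.ofReal_lt_top).ne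
    refine Integrable.mono' hdom huk.aestronglyMeasurable (Eventually.of_forall ?_)
    rintro ⟨u, s⟩
    simp only [Function.uncurry, hk]
    by_cases hc : 1 < u ∧ u ≤ N ∧ u < s ∧ s ≤ N
    · rw [if_pos hc]
      obtain ⟨h1, h2, h3, h4⟩ := hc
      have hmem : (u, s) ∈ Set.Icc (1:ℝ) N ×ˢ Set.Icc (1:ℝ) N :=
        ⟨⟨h1.le, h2⟩, ⟨h1.le.trans h3.le, h4⟩⟩
      rw [Set.indicator_of_mem hmem]
      have hs0 : (0:ℝ) < s := by linarith
      rw [norm_smul, Real.norm_eq_abs, abs_mul, abs_of_nonneg (Real.rpow_nonneg hs0.le _)]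
      have hsb : s ^ (γ-2) ≤ max 1 (N ^ (γ-2)) := rpow_le_max N _ s (by linarith) h4
      have := hC u
      have h5 : (0:ℝ) ≤ s ^ (γ-2) := Real.rpow_nonneg hs0.le _
      calc |γ-1| * s ^ (γ-2) * ‖g u‖ ≤ |γ-1| * max 1 (N ^ (γ-2)) * C := by
            apply mul_le_mul (mul_le_mul le_rfl hsb h5 (abs_nonneg _)) (hC u) (norm_nonneg _)
            positivity
        _ = D := rfl
    · rw [if_neg hc, norm_zero]
      exact Set.indicator_nonneg (fun _ _ => hD0) _
  have swap := MeasureTheory.integral_integral_swap hki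
  -- compute the u-side iterated integral
  have hL1 : (fun u => ∫ s, k u s) =
      (Set.Ioc 1 N).indicator (fun u => (N ^ (γ-1) - u ^ (γ-1)) • g u) := by
    funext u
    by_cases hu : u ∈ Set.Ioc 1 N
    · rw [Set.indicator_of_mem hu]
      obtain ⟨hu1, hu2⟩ := hu
      have hcur : (fun s => k u s) =
          (Set.Ioc u N).indicator (fun s => ((γ-1) * s ^ (γ-2)) • g u) := by
        funext s
        simp only [hk, Set.indicator_apply, Set.mem_Ioc]
        by_cases hs : u < s ∧ s ≤ N
        · rw [if_pos ⟨hu1, hu2, hs.1, hs.2⟩, if_pos hs]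
        · rw [if_neg (fun h => hs ⟨h.2.2.1, h.2.2.2⟩), if_neg hs]
      rw [hcur, MeasureTheory.integral_indicator measurableSet_Ioc,
        integral_smul_const, hw u (by linarith) hu2]
    · rw [Set.indicator_of_notMem hu]
      have hcur : (fun s => k u s) = fun _ => 0 := by
        funext s
        simp only [hk]
        rw [if_neg (fun h => hu ⟨h.1, h.2.1⟩)]
      rw [hcur, integral_zero]
  -- compute the s-side iterated integral
  have hR1 : (fun s => ∫ u, k u s) =
      (Set.Ioc 1 N).indicator
        (fun s => ((γ-1) * s ^ (γ-2)) • ∫ u in Set.Ioc 1 s, g u) := by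
    funext s
    by_cases hs : s ∈ Set.Ioc 1 N
    · rw [Set.indicator_of_mem hs]
      obtain ⟨hs1, hs2⟩ := hs
      have hcur : (fun u => k u s) =
          (Set.Ioo 1 s).indicator (fun u => ((γ-1) * s ^ (γ-2)) • g u) := by
        funext u
        simp only [hk, Set.indicator_apply, Set.mem_Ioo]
        by_cases hu : 1 < u ∧ u < s
        · rw [if_pos ⟨hu.1, hu.2.le.trans hs2, hu.2, hs2⟩, if_pos hu]
        · rw [if_neg (fun h => hu ⟨h.1, h.2.2.1⟩), if_neg hu]
      rw [hcur, MeasureTheory.integral_indicator measurableSet_Ioo,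
        MeasureTheory.integral_smul, ← MeasureTheory.integral_Ioc_eq_integral_Ioo]
    · rw [Set.indicator_of_notMem hs]
      have hcur : (fun u => k u s) = fun _ => 0 := by
        funext u
        simp only [hk]
        rw [if_neg (fun h => hs ⟨lt_trans h.1 h.2.2.1, h.2.2.2⟩)]
      rw [hcur, integral_zero]
  -- the Fubini identity
  have key : (∫ u in Set.Ioc 1 N, (N ^ (γ-1) - u ^ (γ-1)) • g u)
      = (γ-1) • ∫ s in Set.Ioc 1 N, (s ^ (γ-2)) • (∫ u in Set.Ioc 1 s, g u) := by
    have e1 : (∫ u in Set.Ioc 1 N, (N ^ (γ-1) - u ^ (γ-1)) • g u) = ∫ u, ∫ s, k u s := by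
      rw [hL1, MeasureTheory.integral_indicator measurableSet_Ioc]
    have e2 : (∫ s, ∫ u, k u s)
        = (γ-1) • ∫ s in Set.Ioc 1 N, (s ^ (γ-2)) • (∫ u in Set.Ioc 1 s, g u) := by
      rw [hR1, MeasureTheory.integral_indicator measurableSet_Ioc]
      rw [← MeasureTheory.integral_smul]
      congr 1
      funext s
      rw [mul_smul]
    rw [e1, swap, e2]
  -- integrability of the two parts
  have I1 : IntegrableOn (fun u => (u ^ (γ-1)) • g u) (Set.Ioc 1 N) := by
    refine Integrable.mono' (g := fun _ => max 1 (N ^ (γ-1)) * C)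
      (integrableOn_const (by rw [Real.volume_Ioc]; exact ENNReal.ofReal_ne_top))
      (((measurable_id.pow measurable_const).smul hg).aestronglyMeasurable.restrict) ?_
    rw [ae_restrict_iff' measurableSet_Ioc]
    refine Eventually.of_forall fun u hu => ?_
    rw [norm_smul, Real.norm_eq_abs, abs_of_nonneg (Real.rpow_nonneg (by linarith [hu.1]) _)]
    exact mul_le_mul (rpow_le_max N _ u hu.1.le hu.2) (hC u) (norm_nonneg _)
      (le_trans zero_le_one (le_max_left _ _))
  have I2 : IntegrableOn (fun u => (N ^ (γ-1)) • g u) (Set.Ioc 1 N) := (hgi 1 N).smul (N ^ (γ-1) : ℝ)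
  have I3 : IntegrableOn (fun u => (N ^ (γ-1) - u ^ (γ-1)) • g u) (Set.Ioc 1 N) := by
    have : (fun u => (N ^ (γ-1) - u ^ (γ-1)) • g u)
        = fun u => (N ^ (γ-1)) • g u - (u ^ (γ-1)) • g u := by
      funext u; rw [sub_smul]
    rw [this]; exact I2.sub I1
  -- assemble
  have split : (∫ u in Set.Ioc 1 N, (u ^ (γ-1)) • g u)
      = (∫ u in Set.Ioc 1 N, (N ^ (γ-1)) • g u)
        - ∫ u in Set.Ioc 1 N, (N ^ (γ-1) - u ^ (γ-1)) • g u := by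
    rw [← MeasureTheory.integral_sub I2 I3]
    congr 1
    funext u
    rw [sub_smul, sub_sub_cancel]
  rw [split, MeasureTheory.integral_smul, key]

lemma avg (g : ℝ → ℂ) (hg : Measurable g) (C : ℝ) (hC0 : 0 ≤ C) (hC : ∀ u, ‖g u‖ ≤ C)
    (hG : Tendsto (fun N : ℝ => (1 / N) • ∫ u in Set.Ioc (0:ℝ) N, g u) atTop (nhds 0))
    (γ : ℝ) (hγ : 0 < γ) :
    Tendsto (fun N : ℝ => (N ^ (-γ)) • ∫ u in Set.Ioc (0:ℝ) N, (u ^ (γ-1)) • g u)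
      atTop (nhds 0) := by
  -- basic integrability facts
  have hgi : ∀ a b : ℝ, IntegrableOn g (Set.Ioc a b) := by
    intro a b
    refine Integrable.mono' (g := fun _ => C) ?_ (hg.aestronglyMeasurable.restrict)
      (Eventually.of_forall hC)
    exact integrableOn_const (by rw [Real.volume_Ioc]; exact ENNReal.ofReal_ne_top)
  have hgint : ∀ a b : ℝ, IntervalIntegrable g volume a b := by
    intro a b
    rw [intervalIntegrable_iff, Set.uIoc]
    exact hgi _ _
  -- the primitive from 1
  set G1 : ℝ → ℂ := fun s => ∫ u in Set.Ioc 1 s, g u with hG1def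
  have hPcont : Continuous fun s => ∫ u in (1:ℝ)..s, g u :=
    intervalIntegral.continuous_primitive hgint 1
  have hPG : ∀ s : ℝ, 1 ≤ s → G1 s = ∫ u in (1:ℝ)..s, g u := by
    intro s hs
    rw [intervalIntegral.integral_of_le hs]
  -- integrability of rpow weight on Ioc 0 b
  have hrpowInt : ∀ b : ℝ, IntegrableOn (fun u : ℝ => u ^ (γ-1)) (Set.Ioc 0 b) := by
    intro b
    rcases le_or_gt b 0 with hb | hb
    · rw [Set.Ioc_eq_empty (by intro h; exact absurd (lt_of_lt_of_le h hb) (lt_irrefl 0))]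
      exact integrableOn_empty
    · have h := intervalIntegral.intervalIntegrable_rpow' (a := 0) (b := b)
        (r := γ-1) (by linarith)
      rw [intervalIntegrable_iff, Set.uIoc_of_le hb.le] at h
      exact h
  -- the weighted integrand is integrable on Ioc 0 b
  have hWInt : ∀ b : ℝ, IntegrableOn (fun u : ℝ => (u ^ (γ-1)) • g u) (Set.Ioc 0 b) := by
    intro b
    refine Integrable.mono' (g := fun u => u ^ (γ-1) * C) ((hrpowInt b).mul_const C)
      (((measurable_id.pow measurable_const).smul hg).aestronglyMeasurable.restrict) ?_
    rw [ae_restrict_iff' measurableSet_Ioc]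
    refine Eventually.of_forall fun u hu => ?_
    rw [norm_smul, Real.norm_eq_abs, abs_of_nonneg (Real.rpow_nonneg hu.1.le _)]
    exact mul_le_mul_of_nonneg_left (hC u) (Real.rpow_nonneg hu.1.le _)
  -- integrability of the s-weighted primitive
  have J1 : ∀ b : ℝ, 1 ≤ b → IntegrableOn (fun s : ℝ => (s ^ (γ-2)) • G1 s) (Set.Ioc 1 b) := by
    intro b hb
    have cont : ContinuousOn (fun s : ℝ => (s ^ (γ-2)) • ∫ u in (1:ℝ)..s, g u)
        (Set.Icc 1 b) := by
      refine ContinuousOn.fun_smul (fun s hs => ?_) hPcont.continuousOn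
      exact (Real.continuousAt_rpow_const s _
        (Or.inl (ne_of_gt (lt_of_lt_of_le zero_lt_one hs.1)))).continuousWithinAt
    refine IntegrableOn.congr_fun
      ((cont.integrableOn_Icc).mono_set Set.Ioc_subset_Icc_self) ?_ measurableSet_Ioc
    intro s hs
    simp only
    rw [hPG s hs.1.le]
  -- linear bound for the primitive
  have hG1lin : ∀ s : ℝ, 1 ≤ s → ‖G1 s‖ ≤ C * (s - 1) := by
    intro s hs
    have h := norm_setIntegral_le_of_norm_le_const (μ := volume) (s := Set.Ioc 1 s)
      (C := C) (by rw [Real.volume_Ioc]; exact ENNReal.ofReal_lt_top)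
      (fun x _ => hC x)
    rwa [measureReal_def, Real.volume_Ioc, ENNReal.toReal_ofReal (by linarith)] at h
  -- the primitive is o(s)
  have hG1eps : ∀ ε : ℝ, 0 < ε → ∀ᶠ s : ℝ in atTop, ‖G1 s‖ ≤ ε * s := by
    intro ε hε
    set K1 : ℂ := ∫ u in Set.Ioc (0:ℝ) 1, g u with hK1
    have hsplit0 : ∀ s : ℝ, 1 ≤ s → G1 s = (∫ u in Set.Ioc (0:ℝ) s, g u) - K1 := by
      intro s hs
      have h := setIntegral_union (f := g) (μ := volume) (Set.Ioc_disjoint_Ioc_of_le le_rfl)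
        measurableSet_Ioc (hgi 0 1) (hgi 1 s)
      rw [Set.Ioc_union_Ioc_eq_Ioc zero_le_one hs] at h
      rw [hG1def]
      simp only
      rw [h, hK1]
      ring
    have h2 := (NormedAddCommGroup.tendsto_nhds_zero.mp hG) (ε/2) (by positivity)
    filter_upwards [h2, eventually_ge_atTop (1:ℝ), eventually_ge_atTop (2*‖K1‖/ε)]
      with s h2s hs1 hs2
    have hs0 : (0:ℝ) < s := lt_of_lt_of_le zero_lt_one hs1
    have hnorm : ‖∫ u in Set.Ioc (0:ℝ) s, g u‖
        = s * ‖(1/s) • ∫ u in Set.Ioc (0:ℝ) s, g u‖ := by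
      rw [norm_smul, Real.norm_eq_abs, abs_of_pos (by positivity)]
      field_simp
    have hK1b : ‖K1‖ ≤ ε/2 * s := by
      rw [div_le_iff₀ hε] at hs2
      nlinarith
    calc ‖G1 s‖ = ‖(∫ u in Set.Ioc (0:ℝ) s, g u) - K1‖ := by rw [hsplit0 s hs1]
      _ ≤ ‖∫ u in Set.Ioc (0:ℝ) s, g u‖ + ‖K1‖ := norm_sub_le _ _
      _ ≤ s * (ε/2) + ε/2 * s := by
          refine add_le_add ?_ hK1b
          rw [hnorm]
          exact mul_le_mul_of_nonneg_left h2s.le hs0.le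
      _ = ε * s := by ring
  -- main estimate
  rw [NormedAddCommGroup.tendsto_nhds_zero]
  intro ε hε
  set c : ℝ := 1 + |γ-1| / γ with hcdef
  have hc : 0 < c := by positivity
  set ε₁ : ℝ := ε / (2 * c) with hε₁def
  have hε₁ : 0 < ε₁ := by positivity
  obtain ⟨A0, hA0⟩ := eventually_atTop.mp (hG1eps ε₁ hε₁)
  set A : ℝ := max A0 1 with hAdef
  have hA1 : (1:ℝ) ≤ A := le_max_right _ _
  have hAbound : ∀ s : ℝ, A ≤ s → ‖G1 s‖ ≤ ε₁ * s :=
    fun s hs => hA0 s (le_trans (le_max_left _ _) hs)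
  -- constant bound for the integral over Ioc 1 A
  set CA : ℝ := max 1 (A ^ (γ-2)) * (C * (A - 1)) with hCAdef
  have hCA0 : 0 ≤ CA := by
    have h1 : (0:ℝ) ≤ max 1 (A ^ (γ-2)) := le_trans zero_le_one (le_max_left _ _)
    have h2 : (0:ℝ) ≤ C * (A - 1) := mul_nonneg hC0 (by linarith)
    exact mul_nonneg h1 h2
  have hRA : ‖∫ s in Set.Ioc 1 A, (s ^ (γ-2)) • G1 s‖ ≤ CA * (A - 1) := by
    have h := norm_setIntegral_le_of_norm_le_const (μ := volume) (s := Set.Ioc 1 A)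
      (f := fun s : ℝ => (s ^ (γ-2)) • G1 s) (C := CA) (by rw [Real.volume_Ioc]; exact ENNReal.ofReal_lt_top)
      (fun s hs => ?_)
    · rwa [measureReal_def, Real.volume_Ioc, ENNReal.toReal_ofReal (by linarith)] at h
    · have hs0 : (0:ℝ) < s := lt_trans zero_lt_one hs.1
      rw [norm_smul, Real.norm_eq_abs, abs_of_nonneg (Real.rpow_nonneg hs0.le _), hCAdef]
      have b1 : s ^ (γ-2) ≤ max 1 (A ^ (γ-2)) := rpow_le_max A _ s hs.1.le hs.2
      have b2 : ‖G1 s‖ ≤ C * (A - 1) := by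
        refine le_trans (hG1lin s hs.1.le) ?_
        have := hs.2
        nlinarith
      exact mul_le_mul b1 b2 (norm_nonneg _) (le_trans zero_le_one (le_max_left _ _))
  set T0 : ℂ := ∫ u in Set.Ioc (0:ℝ) 1, (u ^ (γ-1)) • g u with hT0def
  set K' : ℝ := ‖T0‖ + |γ-1| * (CA * (A - 1)) with hK'def
  have hev : ∀ᶠ N : ℝ in atTop, N ^ (-γ) * K' < ε/2 := by
    have h := (tendsto_rpow_neg_atTop hγ).mul_const K'
    rw [zero_mul] at h
    exact h.eventually_lt_const (by positivity)
  filter_upwards [eventually_ge_atTop A, eventually_ge_atTop (1:ℝ), hev] with N hNA hN1 hevN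
  have hN0 : (0:ℝ) < N := lt_of_lt_of_le zero_lt_one hN1
  -- split the integral at 1
  have hTsplit : (∫ u in Set.Ioc (0:ℝ) N, (u ^ (γ-1)) • g u)
      = T0 + ∫ u in Set.Ioc (1:ℝ) N, (u ^ (γ-1)) • g u := by
    have h := setIntegral_union (f := fun u : ℝ => (u ^ (γ-1)) • g u) (μ := volume)
      (Set.Ioc_disjoint_Ioc_of_le le_rfl) measurableSet_Ioc (hWInt 1)
      ((hWInt N).mono_set (Set.Ioc_subset_Ioc_left zero_le_one))
    rw [Set.Ioc_union_Ioc_eq_Ioc zero_le_one hN1] at h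
    rw [h, hT0def]
  have key := ibp g hg C hC0 hC γ N hN1
  -- split R at A
  have hRsplit : (∫ s in Set.Ioc (1:ℝ) N, (s ^ (γ-2)) • G1 s)
      = (∫ s in Set.Ioc (1:ℝ) A, (s ^ (γ-2)) • G1 s)
        + ∫ s in Set.Ioc A N, (s ^ (γ-2)) • G1 s := by
    have h := setIntegral_union (f := fun s : ℝ => (s ^ (γ-2)) • G1 s) (μ := volume)
      (Set.Ioc_disjoint_Ioc_of_le le_rfl) measurableSet_Ioc (J1 A hA1)
      ((J1 N hN1).mono_set (Set.Ioc_subset_Ioc_left hA1))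
    rwa [Set.Ioc_union_Ioc_eq_Ioc hA1 hNA] at h
  -- bound the tail of R
  have hIntNorm : IntegrableOn (fun s : ℝ => ‖(s ^ (γ-2)) • G1 s‖) (Set.Ioc A N) :=
    ((J1 N hN1).mono_set (Set.Ioc_subset_Ioc_left hA1)).norm
  have hIntBound : IntegrableOn (fun s : ℝ => ε₁ * s ^ (γ-1)) (Set.Ioc A N) :=
    (((hrpowInt N).mono_set (Set.Ioc_subset_Ioc_left (by linarith))).const_mul ε₁)
  have hR2 : ‖∫ s in Set.Ioc A N, (s ^ (γ-2)) • G1 s‖ ≤ ε₁ / γ * N ^ γ := by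
    have step1 : ‖∫ s in Set.Ioc A N, (s ^ (γ-2)) • G1 s‖
        ≤ ∫ s in Set.Ioc A N, ‖(s ^ (γ-2)) • G1 s‖ := norm_integral_le_integral_norm _
    have step2 : (∫ s in Set.Ioc A N, ‖(s ^ (γ-2)) • G1 s‖)
        ≤ ∫ s in Set.Ioc A N, ε₁ * s ^ (γ-1) := by
      refine setIntegral_mono_on hIntNorm hIntBound measurableSet_Ioc fun s hs => ?_
      have hs1 : (1:ℝ) ≤ s := le_trans hA1 hs.1.le
      have hs0 : (0:ℝ) < s := lt_of_lt_of_le zero_lt_one hs1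
      rw [norm_smul, Real.norm_eq_abs, abs_of_nonneg (Real.rpow_nonneg hs0.le _)]
      have hmul : s ^ (γ-2) * s = s ^ (γ-1) := by
        rw [show γ - 1 = (γ-2) + 1 by ring, Real.rpow_add hs0, Real.rpow_one]
      calc s ^ (γ-2) * ‖G1 s‖ ≤ s ^ (γ-2) * (ε₁ * s) :=
            mul_le_mul_of_nonneg_left (hAbound s hs.1.le) (Real.rpow_nonneg hs0.le _)
        _ = ε₁ * (s ^ (γ-2) * s) := by ring
        _ = ε₁ * s ^ (γ-1) := by rw [hmul]
    have step3 : (∫ s in Set.Ioc A N, ε₁ * s ^ (γ-1)) ≤ ε₁ * (N ^ γ / γ) := by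
      rw [MeasureTheory.integral_const_mul]
      refine mul_le_mul_of_nonneg_left ?_ hε₁.le
      have hmono : (∫ s in Set.Ioc A N, s ^ (γ-1)) ≤ ∫ s in Set.Ioc (0:ℝ) N, s ^ (γ-1) := by
        refine setIntegral_mono_set (hrpowInt N) ?_
          ((Set.Ioc_subset_Ioc_left (by linarith)).eventuallyLE)
        filter_upwards [ae_restrict_mem measurableSet_Ioc] with s hs
        exact Real.rpow_nonneg hs.1.le _
      refine le_trans hmono (le_of_eq ?_)
      rw [← intervalIntegral.integral_of_le hN0.le]
      rw [integral_rpow (Or.inl (by linarith))]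
      rw [show γ - 1 + 1 = γ by ring, Real.zero_rpow hγ.ne', sub_zero]
    calc ‖∫ s in Set.Ioc A N, (s ^ (γ-2)) • G1 s‖
        ≤ ∫ s in Set.Ioc A N, ε₁ * s ^ (γ-1) := le_trans step1 step2
      _ ≤ ε₁ * (N ^ γ / γ) := step3
      _ = ε₁ / γ * N ^ γ := by ring
  -- bound the boundary term
  have hB : ‖(N ^ (γ-1)) • G1 N‖ ≤ ε₁ * N ^ γ := by
    rw [norm_smul, Real.norm_eq_abs, abs_of_nonneg (Real.rpow_nonneg hN0.le _)]
    have hmul : N ^ (γ-1) * N = N ^ γ := by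
      rw [show γ = (γ-1) + 1 by ring]
      rw [Real.rpow_add hN0, Real.rpow_one]
      ring_nf
    calc N ^ (γ-1) * ‖G1 N‖ ≤ N ^ (γ-1) * (ε₁ * N) :=
          mul_le_mul_of_nonneg_left (hAbound N hNA) (Real.rpow_nonneg hN0.le _)
      _ = ε₁ * (N ^ (γ-1) * N) := by ring
      _ = ε₁ * N ^ γ := by rw [hmul]
  -- total bound on T N
  have hT : ‖∫ u in Set.Ioc (0:ℝ) N, (u ^ (γ-1)) • g u‖
      ≤ K' + (ε₁ + |γ-1| * (ε₁ / γ)) * N ^ γ := by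
    rw [hTsplit, key, hRsplit]
    have h1 : ‖(γ-1) • ((∫ s in Set.Ioc (1:ℝ) A, (s ^ (γ-2)) • G1 s)
        + ∫ s in Set.Ioc A N, (s ^ (γ-2)) • G1 s)‖
        ≤ |γ-1| * (CA * (A-1) + ε₁ / γ * N ^ γ) := by
      rw [norm_smul, Real.norm_eq_abs]
      refine mul_le_mul_of_nonneg_left ?_ (abs_nonneg _)
      exact le_trans (norm_add_le _ _) (add_le_add hRA hR2)
    calc ‖T0 + ((N ^ (γ-1)) • (∫ u in Set.Ioc (1:ℝ) N, g u)
          - (γ-1) • ((∫ s in Set.Ioc (1:ℝ) A, (s ^ (γ-2)) • G1 s)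
            + ∫ s in Set.Ioc A N, (s ^ (γ-2)) • G1 s))‖
        ≤ ‖T0‖ + ‖(N ^ (γ-1)) • (∫ u in Set.Ioc (1:ℝ) N, g u)‖
          + ‖(γ-1) • ((∫ s in Set.Ioc (1:ℝ) A, (s ^ (γ-2)) • G1 s)
            + ∫ s in Set.Ioc A N, (s ^ (γ-2)) • G1 s)‖ := by
          refine le_trans (norm_add_le _ _) ?_
          have := norm_sub_le ((N ^ (γ-1)) • (∫ u in Set.Ioc (1:ℝ) N, g u))
            ((γ-1) • ((∫ s in Set.Ioc (1:ℝ) A, (s ^ (γ-2)) • G1 s)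
              + ∫ s in Set.Ioc A N, (s ^ (γ-2)) • G1 s))
          linarith
      _ ≤ ‖T0‖ + ε₁ * N ^ γ + |γ-1| * (CA * (A-1) + ε₁ / γ * N ^ γ) := by
          have := hB
          linarith
      _ = K' + (ε₁ + |γ-1| * (ε₁ / γ)) * N ^ γ := by rw [hK'def]; ring
  -- conclude
  have hNγ : N ^ (-γ) * N ^ γ = 1 := by
    rw [← Real.rpow_add hN0]
    simp
  have hNγpos : (0:ℝ) < N ^ (-γ) := Real.rpow_pos_of_pos hN0 _
  have hfinal : ‖(N ^ (-γ)) • ∫ u in Set.Ioc (0:ℝ) N, (u ^ (γ-1)) • g u‖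
      ≤ N ^ (-γ) * K' + (ε₁ + |γ-1| * (ε₁ / γ)) := by
    rw [norm_smul, Real.norm_eq_abs, abs_of_pos hNγpos]
    calc N ^ (-γ) * ‖∫ u in Set.Ioc (0:ℝ) N, (u ^ (γ-1)) • g u‖
        ≤ N ^ (-γ) * (K' + (ε₁ + |γ-1| * (ε₁ / γ)) * N ^ γ) :=
          mul_le_mul_of_nonneg_left hT hNγpos.le
      _ = N ^ (-γ) * K' + (ε₁ + |γ-1| * (ε₁ / γ)) * (N ^ (-γ) * N ^ γ) := by ring
      _ = N ^ (-γ) * K' + (ε₁ + |γ-1| * (ε₁ / γ)) := by rw [hNγ]; ring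
  have hεc : ε₁ + |γ-1| * (ε₁ / γ) = ε / 2 := by
    rw [hε₁def, hcdef]
    field_simp
  refine lt_of_le_of_lt hfinal ?_
  rw [hεc]
  linarith

lemma cv (f : ℝ → ℂ) (δ : ℝ) (hδ : 0 < δ) (M : ℝ) (hM : 0 ≤ M) :
    ∫ t in Set.Ioc 0 M, f (t ^ δ) =
      ∫ u in Set.Ioc 0 (M ^ δ), ((1/δ) * u ^ (1/δ - 1)) • f u := by
  set N := M ^ δ with hN
  set J : ℝ → ℂ := (Set.Ioc 0 N).indicator (fun u => ((1/δ) * u ^ (1/δ - 1)) • f u) with hJ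
  have key : ∀ x ∈ Set.Ioi (0:ℝ),
      (|δ| * x ^ (δ-1)) • J (x ^ δ) = (Set.Ioc 0 M).indicator (fun t => f (t^δ)) x := by
    intro x hx
    have hx0 : 0 < x := hx
    have hmem : x ^ δ ∈ Set.Ioc 0 N ↔ x ∈ Set.Ioc 0 M := by
      simp only [Set.mem_Ioc, hN]
      constructor
      · rintro ⟨-, h2⟩
        exact ⟨hx0, (Real.rpow_le_rpow_iff hx0.le hM hδ).mp h2⟩
      · rintro ⟨-, h2⟩
        exact ⟨Real.rpow_pos_of_pos hx0 δ, Real.rpow_le_rpow hx0.le h2 hδ.le⟩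
    by_cases hxM : x ∈ Set.Ioc 0 M
    · rw [Set.indicator_of_mem hxM, hJ, Set.indicator_of_mem (hmem.mpr hxM)]
      have h1 : (x ^ δ) ^ (1/δ - 1) = x ^ (1 - δ) := by
        rw [← Real.rpow_mul hx0.le]
        congr 1
        field_simp
      rw [h1, smul_smul]
      have h2 : |δ| * x ^ (δ - 1) * (1 / δ * x ^ (1 - δ)) = 1 := by
        have h3 : x ^ (δ - 1) * x ^ (1 - δ) = 1 := by
          rw [← Real.rpow_add hx0]; norm_num
        rw [abs_of_pos hδ]
        field_simp
        nlinarith [h3]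
      rw [h2, one_smul]
    · rw [Set.indicator_of_notMem hxM, hJ,
        Set.indicator_of_notMem (fun h => hxM (hmem.mp h)), smul_zero]
  calc ∫ t in Set.Ioc 0 M, f (t ^ δ)
      = ∫ x in Set.Ioi (0:ℝ), (Set.Ioc 0 M).indicator (fun t => f (t^δ)) x := by
        rw [MeasureTheory.integral_indicator measurableSet_Ioc,
          Measure.restrict_restrict measurableSet_Ioc,
          Set.inter_eq_left.mpr (Set.Ioc_subset_Ioi_self)]
    _ = ∫ x in Set.Ioi (0:ℝ), (|δ| * x ^ (δ-1)) • J (x ^ δ) :=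
        (setIntegral_congr_fun measurableSet_Ioi key).symm
    _ = ∫ u in Set.Ioi (0:ℝ), J u := integral_comp_rpow_Ioi J hδ.ne'
    _ = ∫ u in Set.Ioc 0 N, ((1/δ) * u ^ (1/δ - 1)) • f u := by
        rw [hJ, MeasureTheory.integral_indicator measurableSet_Ioc,
          Measure.restrict_restrict measurableSet_Ioc,
          Set.inter_eq_left.mpr (Set.Ioc_subset_Ioi_self)]

/-- If the averages `(1/M) ∫₀^M f(t) dt` of an essentially bounded
function `f : ℝ → ℂ` converge as `M → ∞`, then so do the averages
`(1/M) ∫₀^M f(t^δ) dt`, with the same limit. -/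
theorem stmt0 (δ : ℝ) (hδ : 0 < δ) (f : ℝ → ℂ)
    (hf : MemLp f ⊤ (volume : Measure ℝ)) (L : ℂ)
    (hL : Tendsto (fun M : ℝ => (1 / M) • ∫ t in Set.Ioc (0 : ℝ) M, f t)
      atTop (nhds L)) :
    Tendsto (fun M : ℝ => (1 / M) • ∫ t in Set.Ioc (0 : ℝ) M, f (t ^ δ))
      atTop (nhds L) := by
  set γ : ℝ := 1 / δ with hγdef
  have hγ : 0 < γ := by positivity
  -- a bounded measurable representative of f
  set C₀ : ℝ := (eLpNorm f ⊤ volume).toReal with hC₀def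
  have hC₀0 : 0 ≤ C₀ := ENNReal.toReal_nonneg
  have hfae : ∀ᵐ t : ℝ ∂(volume : Measure ℝ), ‖f t‖ ≤ C₀ := by
    have h1 : ∀ᵐ t : ℝ ∂(volume : Measure ℝ), (‖f t‖₊ : ℝ≥0∞) ≤ eLpNormEssSup f volume := ae_le_eLpNormEssSup
    have hfin : eLpNorm f ⊤ volume ≠ ⊤ := hf.2.ne
    rw [eLpNorm_exponent_top] at hfin
    filter_upwards [h1] with t ht
    have := ENNReal.toReal_mono hfin ht
    rwa [ENNReal.coe_toReal, coe_nnnorm] at this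
  set f' : ℝ → ℂ := hf.1.mk f with hf'def
  have hf'sm : StronglyMeasurable f' := hf.1.stronglyMeasurable_mk
  set E : Set ℝ := {u | ‖f' u‖ ≤ C₀} with hEdef
  have hE : MeasurableSet E := measurableSet_le hf'sm.measurable.norm measurable_const
  set fb : ℝ → ℂ := E.indicator f' with hfbdef
  have hfbm : Measurable fb := hf'sm.measurable.indicator hE
  have hfbbd : ∀ u, ‖fb u‖ ≤ C₀ := by
    intro u
    rw [hfbdef]
    by_cases hu : u ∈ E
    · rw [Set.indicator_of_mem hu]; exact hu
    · rw [Set.indicator_of_notMem hu, norm_zero]; exact hC₀0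
  have hfbae : fb =ᵐ[volume] f := by
    filter_upwards [hf.1.ae_eq_mk, hfae] with t h1 h2
    have h1' : f t = f' t := h1
    have htE : t ∈ E := by rw [hEdef]; simp only [Set.mem_setOf_eq]; rw [← h1']; exact h2
    rw [hfbdef, Set.indicator_of_mem htE, ← h1']
  -- the centered function
  set g : ℝ → ℂ := fun u => fb u - L with hgdef
  have hgm : Measurable g := hfbm.sub measurable_const
  set C : ℝ := C₀ + ‖L‖ with hCdef
  have hC0 : 0 ≤ C := add_nonneg hC₀0 (norm_nonneg _)
  have hgbd : ∀ u, ‖g u‖ ≤ C :=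
    fun u => le_trans (norm_sub_le _ _) (add_le_add (hfbbd u) le_rfl)
  -- integrability on bounded intervals
  have hfbi : ∀ b : ℝ, IntegrableOn fb (Set.Ioc 0 b) := by
    intro b
    refine Integrable.mono' (g := fun _ => C₀) ?_ (hfbm.aestronglyMeasurable.restrict)
      (Eventually.of_forall hfbbd)
    exact integrableOn_const (by rw [Real.volume_Ioc]; exact ENNReal.ofReal_ne_top)
  have hLi : ∀ b : ℝ, IntegrableOn (fun _ : ℝ => L) (Set.Ioc 0 b) := by
    intro b
    exact integrableOn_const (by rw [Real.volume_Ioc]; exact ENNReal.ofReal_ne_top)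
  have hintf : ∀ b : ℝ, (∫ u in Set.Ioc (0:ℝ) b, fb u) = ∫ u in Set.Ioc (0:ℝ) b, f u :=
    fun b => integral_congr_ae (ae_restrict_of_ae (by filter_upwards [hfbae] with t ht using ht))
  have hconst : ∀ b : ℝ, 0 ≤ b → (∫ _ in Set.Ioc (0:ℝ) b, L) = b • L := by
    intro b hb
    rw [setIntegral_const, measureReal_def, Real.volume_Ioc, sub_zero, ENNReal.toReal_ofReal hb]
  -- the averages of g tend to 0
  have hG : Tendsto (fun N : ℝ => (1 / N) • ∫ u in Set.Ioc (0:ℝ) N, g u) atTop (nhds 0) := by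
    have h1 : Tendsto (fun M : ℝ => (1 / M) • (∫ t in Set.Ioc (0 : ℝ) M, f t) - L)
        atTop (nhds 0) := by
      have := hL.sub (tendsto_const_nhds (x := L) (f := atTop))
      rwa [sub_self] at this
    refine Tendsto.congr' ?_ h1
    filter_upwards [eventually_ge_atTop (1:ℝ)] with N hN1
    have hN0 : (0:ℝ) < N := lt_of_lt_of_le zero_lt_one hN1
    rw [hgdef]
    have hsub : (∫ u in Set.Ioc (0:ℝ) N, (fb u - L))
        = (∫ u in Set.Ioc (0:ℝ) N, fb u) - ∫ _ in Set.Ioc (0:ℝ) N, L :=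
      integral_sub (hfbi N) (hLi N)
    simp only
    rw [hsub, hintf N, hconst N hN0.le, smul_sub, smul_smul]
    rw [one_div, inv_mul_cancel₀ hN0.ne', one_smul]
  -- apply the key limit lemma
  have havg := avg g hgm C hC0 hgbd hG γ hγ
  have hcomp := havg.comp (tendsto_rpow_atTop hδ)
  have hsmul := hcomp.const_smul (γ : ℝ)
  rw [smul_zero] at hsmul
  have hfinal := (tendsto_const_nhds (x := L) (f := atTop)).add hsmul
  rw [add_zero] at hfinal
  refine Tendsto.congr' ?_ hfinal
  filter_upwards [eventually_ge_atTop (1:ℝ)] with M hM1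
  simp only [Function.comp_apply]
  have hM0 : (0:ℝ) < M := lt_of_lt_of_le zero_lt_one hM1
  set N : ℝ := M ^ δ with hNdef
  have hN0 : (0:ℝ) < N := Real.rpow_pos_of_pos hM0 δ
  -- rpow integrability
  have hrpowInt : IntegrableOn (fun u : ℝ => u ^ (γ-1)) (Set.Ioc 0 N) := by
    have h := intervalIntegral.intervalIntegrable_rpow' (a := 0) (b := N)
      (r := γ-1) (by linarith)
    rw [intervalIntegrable_iff, Set.uIoc_of_le hN0.le] at h
    exact h
  have Ia : IntegrableOn (fun u : ℝ => (γ * u ^ (γ-1)) • g u) (Set.Ioc 0 N) := by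
    refine Integrable.mono' (g := fun u => γ * u ^ (γ-1) * C)
      (((hrpowInt).const_mul γ).mul_const C)
      (((measurable_const.mul (measurable_id.pow measurable_const)).smul
        hgm).aestronglyMeasurable.restrict) ?_
    rw [ae_restrict_iff' measurableSet_Ioc]
    refine Eventually.of_forall fun u hu => ?_
    rw [norm_smul, Real.norm_eq_abs, abs_of_nonneg
      (mul_nonneg hγ.le (Real.rpow_nonneg hu.1.le _))]
    exact mul_le_mul_of_nonneg_left (hgbd u)
      (mul_nonneg hγ.le (Real.rpow_nonneg hu.1.le _))
  have Ib : IntegrableOn (fun u : ℝ => (γ * u ^ (γ-1)) • L) (Set.Ioc 0 N) :=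
    ((hrpowInt.const_mul γ).smul_const L)
  -- the change of variables and the algebraic identity
  have hNγ : N ^ γ = M := by
    rw [hNdef, ← Real.rpow_mul hM0.le, hγdef, mul_one_div_cancel hδ.ne', Real.rpow_one]
  have hNinv : N ^ (-γ) = 1 / M := by
    rw [hNdef, ← Real.rpow_mul hM0.le]
    rw [show δ * -γ = -1 by rw [hγdef]; field_simp]
    rw [Real.rpow_neg_one, one_div]
  have hrint : (∫ u in Set.Ioc (0:ℝ) N, γ * u ^ (γ-1)) = N ^ γ := by
    rw [MeasureTheory.integral_const_mul]
    rw [← intervalIntegral.integral_of_le hN0.le, integral_rpow (Or.inl (by linarith))]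
    rw [show γ - 1 + 1 = γ by ring, Real.zero_rpow hγ.ne', sub_zero]
    field_simp
  have hcalc : (1 / M) • (∫ t in Set.Ioc (0 : ℝ) M, f (t ^ δ))
      = L + γ • (N ^ (-γ)) • ∫ u in Set.Ioc (0:ℝ) N, (u ^ (γ-1)) • g u := by
    calc (1 / M) • ∫ t in Set.Ioc (0 : ℝ) M, f (t ^ δ)
        = (1 / M) • ∫ u in Set.Ioc (0:ℝ) N, ((1/δ) * u ^ (1/δ - 1)) • f u := by
          rw [cv f δ hδ M hM0.le, ← hNdef]
      _ = (1 / M) • ∫ u in Set.Ioc (0:ℝ) N, (γ * u ^ (γ-1)) • fb u := by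
          congr 1
          refine integral_congr_ae (ae_restrict_of_ae ?_)
          filter_upwards [hfbae] with u hu
          rw [hu, hγdef, one_div]
      _ = (1 / M) • ((∫ u in Set.Ioc (0:ℝ) N, (γ * u ^ (γ-1)) • g u)
            + ∫ u in Set.Ioc (0:ℝ) N, (γ * u ^ (γ-1)) • L) := by
          congr 1
          rw [← integral_add Ia Ib]
          congr 1
          funext u
          rw [hgdef]
          simp only
          rw [smul_sub]
          abel
      _ = L + γ • (N ^ (-γ)) • ∫ u in Set.Ioc (0:ℝ) N, (u ^ (γ-1)) • g u := by
          rw [integral_smul_const, hrint, hNγ]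
          have e1 : (∫ u in Set.Ioc (0:ℝ) N, (γ * u ^ (γ-1)) • g u)
              = γ • ∫ u in Set.Ioc (0:ℝ) N, (u ^ (γ-1)) • g u := by
            rw [← MeasureTheory.integral_smul]
            congr 1
            funext u
            rw [mul_smul]
          rw [e1, smul_add]
          have h2 : (1/M : ℝ) • (M • L) = L := by
            rw [smul_smul, one_div, inv_mul_cancel₀ hM0.ne', one_smul]
          have h3 : (1/M : ℝ) • (γ • ∫ u in Set.Ioc (0:ℝ) N, (u ^ (γ-1)) • g u)
              = γ • (N ^ (-γ)) • ∫ u in Set.Ioc (0:ℝ) N, (u ^ (γ-1)) • g u := by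
            rw [smul_smul, smul_smul, hNinv, mul_comm]
          rw [h2, h3, add_comm]
  exact hcalc.symm
end

section
/- Let (X, 𝒳, μ, T) be a measure-preserving system on a Lebesgue probability space, F ∈ L^∞(μ), and (a_n)_{n≥1} a sequence of natural numbers with a_n → ∞. Suppose the discrete polynomial ergodic averages along a polynomial P ∈ ℤ[n] satisfy the pointwise ergodic theorem: for every bounded measurable h, lim_N E_{n < N} h(T^{P(n)} x) exists μ-a.e. and equals the L¹-limit in integral. Then for μ-a.e. x ∈ X, lim_{N→∞} E_{n < N} | (E_{i < a_n} F(T^i (T^{P(n)} x))) − 𝔼_μ(F | ℐ(T))(T^{P(n)} x) | = 0, where ℐ(T) is the σ-algebra of T-invariant sets. -/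
open MeasureTheory Filter
open scoped NNReal ENNReal

set_option linter.unusedSectionVars false
set_option maxHeartbeats 1000000

section aux
variable {X : Type*} [m0 : MeasurableSpace X] (μ : Measure X) [IsProbabilityMeasure μ]
variable (S : X → X)

/-- the family of a.e.-invariant measurable sets is a σ-algebra -/
def invAlg' : MeasurableSpace X where
  MeasurableSet' A := MeasurableSet A ∧ (S ⁻¹' A : Set X) =ᵐ[μ] A
  measurableSet_empty := ⟨MeasurableSet.empty, by simp⟩
  measurableSet_compl A hA := ⟨hA.1.compl, by
    simpa [Set.preimage_compl] using hA.2.compl⟩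
  measurableSet_iUnion f hf := ⟨MeasurableSet.iUnion fun i => (hf i).1, by
    simpa [Set.preimage_iUnion] using EventuallyEq.countable_iUnion fun i => (hf i).2⟩

omit [IsProbabilityMeasure μ] in
theorem gen_le_inv : MeasurableSpace.generateFrom
    {A : Set X | MeasurableSet A ∧ (S ⁻¹' A : Set X) =ᵐ[μ] A} ≤ invAlg' μ S :=
  MeasurableSpace.generateFrom_le fun _ h => h

omit [IsProbabilityMeasure μ] in
theorem invAlg_le : MeasurableSpace.generateFrom
    {A : Set X | MeasurableSet A ∧ (S ⁻¹' A : Set X) =ᵐ[μ] A} ≤ m0 :=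
  fun A hA => ((gen_le_inv μ S) A hA).1

omit [IsProbabilityMeasure μ] in
/-- an invariant-σ-algebra-measurable function is a.e. invariant -/
theorem invariant_fun {ψ : X → ℝ}
    (hψ : Measurable[MeasurableSpace.generateFrom
      {A : Set X | MeasurableSet A ∧ (S ⁻¹' A : Set X) =ᵐ[μ] A}] ψ) :
    (fun x => ψ (S x)) =ᵐ[μ] ψ := by
  have key : ∀ᵐ x ∂μ, ∀ q : ℚ, ((q:ℝ) < ψ (S x)) = ((q:ℝ) < ψ x) := by
    rw [ae_all_iff]
    intro q
    exact ((gen_le_inv μ S) _ (hψ measurableSet_Ioi)).2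
  filter_upwards [key] with x hx
  by_contra hne
  rcases lt_or_gt_of_ne hne with h | h
  · obtain ⟨q, hq1, hq2⟩ := exists_rat_btwn h
    exact absurd ((hx q).symm ▸ hq2) (by simpa using hq1.le)
  · obtain ⟨q, hq1, hq2⟩ := exists_rat_btwn h
    exact absurd ((hx q) ▸ hq2) (by simpa using hq1.le)
end aux

section garsia
variable {X : Type*} [m0 : MeasurableSpace X] (μ : Measure X) [IsProbabilityMeasure μ]
variable (S : X → X)

/-- Birkhoff sums -/
def bS (f : X → ℝ) (n : ℕ) (x : X) : ℝ := ∑ i ∈ Finset.range n, f (S^[i] x)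

/-- running max of Birkhoff sums, `M N x = max_{n ≤ N} S_n f x ≥ 0` -/
def bM (f : X → ℝ) : ℕ → X → ℝ
  | 0 => fun _ => 0
  | N + 1 => fun x => max (bM f N x) (bS S f (N + 1) x)

omit m0 in
theorem bS_succ (f : X → ℝ) (n : ℕ) (x : X) :
    bS S f (n + 1) x = f x + bS S f n (S x) := by
  rw [bS, Finset.sum_range_succ', bS]
  simp [Function.iterate_succ_apply]
  ring

omit m0 in theorem bM_nonneg (f : X → ℝ) (N : ℕ) (x : X) : 0 ≤ bM S f N x := by
  induction N with
  | zero => simp [bM]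
  | succ N ih => exact le_trans ih (le_max_left _ _)

omit m0 in theorem bM_mono (f : X → ℝ) {N N' : ℕ} (h : N ≤ N') (x : X) :
    bM S f N x ≤ bM S f N' x := by
  induction N' with
  | zero => simp_all
  | succ N' ih =>
    rcases Nat.lt_or_ge N (N' + 1) with h' | h'
    · exact (ih (Nat.lt_succ_iff.1 h')).trans (le_max_left _ _)
    · have : N = N' + 1 := by omega
      subst this; exact le_refl _

omit m0 in theorem bS_le_bM (f : X → ℝ) {n N : ℕ} (h : n ≤ N) (x : X) :
    bS S f n x ≤ bM S f N x := by
  rcases n with _ | n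
  · simpa [bS] using bM_nonneg S f N x
  · exact le_trans (le_max_right (bM S f n x) _) (bM_mono S f h x)

omit m0 in
/-- key pointwise inequality -/
theorem bM_key (f : X → ℝ) (N : ℕ) (x : X) :
    bM S f (N + 1) x ≤ max 0 (f x + bM S f N (S x)) := by
  induction N with
  | zero => simp [bM, bS_succ, bS]
  | succ N ih =>
    rw [bM]
    refine max_le (ih.trans ?_) ?_
    · exact max_le_max le_rfl (add_le_add le_rfl (bM_mono S f (Nat.le_succ N) (S x)))
    · rw [bS_succ]
      exact le_max_of_le_right (add_le_add le_rfl (bS_le_bM S f le_rfl (S x)))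
end garsia

section garsia2
variable {X : Type*} [m0 : MeasurableSpace X] {μ : Measure X} [IsProbabilityMeasure μ]
variable {S : X → X} (hS : Measurable S) (hSm : MeasurePreserving S μ μ)

theorem integrable_bdd {g : X → ℝ} (hg : Measurable g) {C : ℝ} (hC : ∀ x, |g x| ≤ C) :
    Integrable g μ :=
  ⟨hg.aestronglyMeasurable, HasFiniteIntegral.of_bounded (C := C)
    (Eventually.of_forall fun x => by simpa using hC x)⟩

include hS in
theorem bS_meas {f : X → ℝ} (hf : Measurable f) (n : ℕ) : Measurable (bS S f n) :=
  Finset.measurable_sum _ fun i _ => hf.comp (hS.iterate i)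

omit m0 in
theorem bS_bdd {f : X → ℝ} {C : ℝ} (hC : ∀ x, |f x| ≤ C) (n : ℕ) (x : X) :
    |bS S f n x| ≤ n * C := by
  calc |bS S f n x| ≤ ∑ i ∈ Finset.range n, |f (S^[i] x)| := Finset.abs_sum_le_sum_abs _ _
  _ ≤ ∑ _i ∈ Finset.range n, C := Finset.sum_le_sum fun i _ => hC _
  _ = n * C := by simp [mul_comm]

include hS in
theorem bM_meas {f : X → ℝ} (hf : Measurable f) (N : ℕ) : Measurable (bM S f N) := by
  induction N with
  | zero => simp only [bM]; exact measurable_const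
  | succ N ih => exact ih.max (bS_meas hS hf (N + 1))

omit m0 in
theorem bM_bdd {f : X → ℝ} {C : ℝ} (hC : ∀ x, |f x| ≤ C) (N : ℕ) (x : X) :
    |bM S f N x| ≤ N * C := by
  have hC0 : 0 ≤ C := (abs_nonneg _).trans (hC x)
  rw [abs_le]
  refine ⟨by nlinarith [bM_nonneg S f N x, Nat.cast_nonneg (α := ℝ) N], ?_⟩
  induction N with
  | zero => simp [bM]
  | succ N ih =>
    rw [bM]
    refine max_le (ih.trans (by push_cast; nlinarith)) ?_
    exact (le_abs_self _).trans ((bS_bdd hC _ x).trans (by push_cast; ring_nf; rfl))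

include hS hSm in
theorem int_comp (g : X → ℝ) (hg : AEStronglyMeasurable g μ) :
    ∫ x, g (S x) ∂μ = ∫ x, g x ∂μ := by
  rw [← integral_map hS.aemeasurable (by rwa [hSm.map_eq]), hSm.map_eq]

include hS hSm in
theorem garsia (f : X → ℝ) (hf : Measurable f) {C : ℝ} (hC : ∀ x, |f x| ≤ C) (N : ℕ) :
    0 ≤ ∫ x in {x | 0 < bM S f N x}, f x ∂μ := by
  rcases N with _ | N
  · simp [bM]
  set M := bM S f (N + 1) with hM
  have hMmeas : Measurable M := bM_meas hS hf (N + 1)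
  have hMint : Integrable M μ := integrable_bdd hMmeas (bM_bdd hC (N + 1))
  have hMSint : Integrable (fun x => M (S x)) μ :=
    integrable_bdd (hMmeas.comp hS) (fun x => bM_bdd hC (N + 1) (S x))
  have hfint : Integrable f μ := integrable_bdd hf hC
  set G := {x | 0 < M x} with hG
  have hGmeas : MeasurableSet G := measurableSet_lt measurable_const hMmeas
  have key : ∀ x ∈ G, M x - M (S x) ≤ f x := by
    intro x hx
    have h1 := bM_key S f N x
    have h2 : M x ≤ f x + bM S f N (S x) := by
      rcases le_max_iff.1 h1 with h | h
      · exact absurd hx (by simp only [hG, Set.mem_setOf_eq, not_lt]; exact h)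
      · exact h
    have h3 := bM_mono S f (Nat.le_succ N) (S x)
    linarith
  have hcomp : ∫ x, M (S x) ∂μ = ∫ x, M x ∂μ :=
    int_comp hS hSm M hMmeas.aestronglyMeasurable
  calc (0:ℝ) = ∫ x, M x ∂μ - ∫ x, M (S x) ∂μ := by rw [hcomp]; ring
  _ ≤ ∫ x in G, M x ∂μ - ∫ x in G, M (S x) ∂μ := by
        gcongr ?_ - ?_
        · have h0 : ∫ x in Gᶜ, M x ∂μ = 0 := setIntegral_eq_zero_of_forall_eq_zero
            (fun x hx => le_antisymm (not_lt.1 hx) (bM_nonneg S f (N + 1) x))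
          rw [← integral_add_compl hGmeas hMint, h0, add_zero]
        · exact setIntegral_le_integral hMSint
            (Eventually.of_forall fun x => bM_nonneg S f (N + 1) (S x))
  _ = ∫ x in G, (M x - M (S x)) ∂μ := (integral_sub hMint.integrableOn hMSint.integrableOn).symm
  _ ≤ ∫ x in G, f x ∂μ := setIntegral_mono_on
        ((hMint.sub hMSint).integrableOn) hfint.integrableOn hGmeas key
end garsia2

section freq
variable {X : Type*} [m0 : MeasurableSpace X] {μ : Measure X} [IsProbabilityMeasure μ]
variable {S : X → X} (hS : Measurable S) (hSm : MeasurePreserving S μ μ)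

/-- frequently `bS ψ m x > q m` -/
def Afreq (S : X → X) (ψ : X → ℝ) (q : ℝ) : Set X :=
  {x | ∀ k : ℕ, ∃ m : ℕ, k ≤ m ∧ q * m < bS S ψ m x}

/-- `limsup (bS ψ m)/m > ε` -/
def Abig (S : X → X) (ψ : X → ℝ) (ε : ℝ) : Set X :=
  {x | ∃ q : ℚ, ε < (q : ℝ) ∧ x ∈ Afreq S ψ (q : ℝ)}

include hS in
theorem Afreq_meas {ψ : X → ℝ} (hψ : Measurable ψ) (q : ℝ) :
    MeasurableSet (Afreq S ψ q) := by
  have : Afreq S ψ q = ⋂ k : ℕ, ⋃ m : ℕ, ⋃ (_ : k ≤ m), {x | q * m < bS S ψ m x} := by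
    ext x; simp [Afreq]
  rw [this]
  exact MeasurableSet.iInter fun k => MeasurableSet.iUnion fun m => MeasurableSet.iUnion
    fun _ => measurableSet_lt measurable_const (bS_meas hS hψ m)

include hS in
theorem Abig_meas {ψ : X → ℝ} (hψ : Measurable ψ) (ε : ℝ) :
    MeasurableSet (Abig S ψ ε) := by
  have : Abig S ψ ε = ⋃ q : ℚ, ⋃ (_ : ε < (q:ℝ)), Afreq S ψ (q:ℝ) := by
    ext x; simp [Abig]
  rw [this]
  exact MeasurableSet.iUnion fun q => MeasurableSet.iUnion fun _ => Afreq_meas hS hψ _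

omit m0 in
/-- main transfer estimate; from frequent q-largeness at `S x` to frequent q'-largeness at
`x` and vice versa -/
theorem Abig_inv {ψ : X → ℝ} {C : ℝ} (hC : ∀ x, |ψ x| ≤ C) {ε : ℝ} (hε : 0 < ε) :
    S ⁻¹' (Abig S ψ ε) = Abig S ψ ε := by
  ext x
  simp only [Set.mem_preimage, Abig, Set.mem_setOf_eq]
  constructor
  · rintro ⟨q, hq, hfreq⟩
    obtain ⟨q', hq'1, hq'2⟩ := exists_rat_btwn hq
    refine ⟨q', hq'1, fun k => ?_⟩
    obtain ⟨m₀, hm₀⟩ := exists_nat_ge ((C + q') / ((q:ℝ) - q'))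
    obtain ⟨m, hm1, hm2⟩ := hfreq (max k m₀)
    refine ⟨m + 1, le_trans (le_trans (le_max_left _ _) hm1) (Nat.le_succ m), ?_⟩
    rw [bS_succ]
    have h1 : (m₀ : ℝ) ≤ m := Nat.cast_le.2 (le_trans (le_max_right _ _) hm1)
    have h2 : (0:ℝ) < (q:ℝ) - q' := by linarith
    have h3 : (C + q') ≤ ((q:ℝ) - q') * m := by
      rw [← div_le_iff₀' h2] at *
      calc (C + ↑q') / ((q:ℝ) - ↑q') ≤ (m₀:ℝ) := hm₀
      _ ≤ m := h1
    have h4 := hC x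
    push_cast
    nlinarith [abs_le.1 h4]
  · rintro ⟨q, hq, hfreq⟩
    obtain ⟨q', hq'1, hq'2⟩ := exists_rat_btwn hq
    refine ⟨q', hq'1, fun k => ?_⟩
    obtain ⟨m₀, hm₀⟩ := exists_nat_ge ((C + q') / ((q:ℝ) - q'))
    obtain ⟨m, hm1, hm2⟩ := hfreq (max (k + 1) (m₀ + 1))
    have hm1' : k + 1 ≤ m := le_trans (le_max_left _ _) hm1
    obtain ⟨m', rfl⟩ : ∃ m', m = m' + 1 := ⟨m - 1, by omega⟩
    rw [bS_succ] at hm2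
    refine ⟨m', by omega, ?_⟩
    have h1 : (m₀ : ℝ) ≤ m' := by
      have : m₀ + 1 ≤ m' + 1 := le_trans (le_max_right _ _) hm1
      exact_mod_cast Nat.cast_le.2 (by omega)
    have h2 : (0:ℝ) < (q:ℝ) - q' := by linarith
    have h3 : (C + q') ≤ ((q:ℝ) - q') * m' := by
      rw [← div_le_iff₀' h2] at *
      calc (C + ↑q') / ((q:ℝ) - ↑q') ≤ (m₀:ℝ) := hm₀
      _ ≤ m' := h1
    have h4 := hC x
    have hq0 : (0:ℝ) < q' := lt_trans hε hq'1
    push_cast at hm2 ⊢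
    nlinarith [abs_le.1 h4]

omit m0 in
theorem mem_A_iter {ψ : X → ℝ} {C : ℝ} (hC : ∀ x, |ψ x| ≤ C) {ε : ℝ} (hε : 0 < ε)
    {x : X} (hx : x ∈ Abig S ψ ε) (i : ℕ) : S^[i] x ∈ Abig S ψ ε := by
  induction i with
  | zero => simpa using hx
  | succ i ih =>
    rw [Function.iterate_succ_apply']
    rw [← Abig_inv hC hε] at ih
    exact ih

include hS hSm in
theorem freq_null {ψ : X → ℝ} (hψ : Measurable ψ) {C : ℝ} (hC : ∀ x, |ψ x| ≤ C)
    (hint : ∀ A : Set X, MeasurableSet A → S ⁻¹' A = A → ∫ x in A, ψ x ∂μ = 0)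
    {ε : ℝ} (hε : 0 < ε) : μ (Abig S ψ ε) = 0 := by
  set A := Abig S ψ ε with hA
  have hAmeas : MeasurableSet A := Abig_meas hS hψ ε
  set g : X → ℝ := A.indicator (fun x => ψ x - ε) with hg
  have hgmeas : Measurable g := (hψ.sub measurable_const).indicator hAmeas
  have hgbdd : ∀ x, |g x| ≤ C + ε := by
    intro x
    have h4 := hC x
    have hC0 : 0 ≤ C := (abs_nonneg _).trans h4
    by_cases hx : x ∈ A <;> simp [hg, hx, Set.indicator_of_mem, Set.indicator_of_notMem]
    · rw [abs_le]; constructor <;> nlinarith [abs_le.1 h4]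
    · positivity
  have hgint : Integrable g μ := integrable_bdd hgmeas hgbdd
  -- A is contained in the union of the maximal sets
  have hsub : A ⊆ ⋃ N : ℕ, {x | 0 < bM S g N x} := by
    intro x hx
    have hiter : ∀ i, S^[i] x ∈ A := mem_A_iter hC hε hx
    obtain ⟨q, hq, hfreq⟩ := hx
    obtain ⟨m, hm1, hm2⟩ := hfreq 1
    have hbs : bS S g m x = bS S ψ m x - ε * m := by
      calc bS S g m x = ∑ i ∈ Finset.range m, (ψ (S^[i] x) - ε) :=
            Finset.sum_congr rfl fun i _ => by simp [hg, Set.indicator_of_mem (hiter i)]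
      _ = bS S ψ m x - ε * m := by rw [Finset.sum_sub_distrib]; simp [bS, mul_comm]
    refine Set.mem_iUnion.2 ⟨m, ?_⟩
    have h5 : (0:ℝ) < bS S g m x := by
      rw [hbs]
      have : (1:ℝ) ≤ m := by exact_mod_cast hm1
      nlinarith [lt_trans hε hq]
    exact lt_of_lt_of_le h5 (bS_le_bM S g le_rfl x)
  -- limit of Garsia inequalities
  have hGmeas : ∀ N : ℕ, MeasurableSet {x | 0 < bM S g N x} :=
    fun N => measurableSet_lt measurable_const (bM_meas hS hgmeas N)
  have hmono : Monotone (fun N => {x | 0 < bM S g N x}) := by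
    intro N N' h x hx
    exact lt_of_lt_of_le hx (bM_mono S g h x)
  have hlim := tendsto_setIntegral_of_monotone hGmeas hmono hgint.integrableOn
  have hpos : 0 ≤ ∫ x in ⋃ N : ℕ, {x | 0 < bM S g N x}, g x ∂μ :=
    ge_of_tendsto' hlim (fun N => garsia hS hSm g hgmeas hgbdd N)
  -- compute the integral
  have hcalc : ∫ x in ⋃ N : ℕ, {x | 0 < bM S g N x}, g x ∂μ = - ε * (μ A).toReal := by
    rw [hg, setIntegral_indicator hAmeas,
      Set.inter_eq_right.2 hsub,
      integral_sub (integrable_bdd hψ hC).integrableOn (integrable_const ε).integrableOn,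
      hint A hAmeas (Abig_inv hC hε), setIntegral_const]
    simp [mul_comm, measureReal_def]
  rw [hcalc] at hpos
  have := (measure_lt_top μ A).ne
  have h6 : (μ A).toReal = 0 := by nlinarith [ENNReal.toReal_nonneg (a := μ A)]
  exact (ENNReal.toReal_eq_zero_iff _).1 h6 |>.resolve_right this

omit m0 in
theorem bS_neg (ψ : X → ℝ) (m : ℕ) (x : X) : bS S (fun y => -ψ y) m x = - bS S ψ m x := by
  simp [bS]

include hS hSm in
theorem birkhoff_bdd {ψ : X → ℝ} (hψ : Measurable ψ) {C : ℝ} (hC : ∀ x, |ψ x| ≤ C)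
    (hint : ∀ A : Set X, MeasurableSet A → S ⁻¹' A = A → ∫ x in A, ψ x ∂μ = 0) :
    ∀ᵐ x ∂μ, Tendsto (fun m : ℕ => bS S ψ m x / m) atTop (nhds 0) := by
  have hneg : ∀ A : Set X, MeasurableSet A → S ⁻¹' A = A →
      ∫ x in A, (fun y => -ψ y) x ∂μ = 0 := by
    intro A h1 h2
    simp only [integral_neg, hint A h1 h2, neg_zero]
  have key : ∀ᵐ x ∂μ, ∀ q : ℚ, 0 < q →
      x ∉ Abig S ψ ((q:ℝ)/2) ∧ x ∉ Abig S (fun y => -ψ y) ((q:ℝ)/2) := by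
    rw [ae_all_iff]
    intro q
    by_cases hq : 0 < q
    · have h1 : (0:ℝ) < (q:ℝ)/2 := by positivity
      have z1 := freq_null hS hSm hψ hC hint h1
      have z2 := freq_null hS hSm (hψ.neg) (fun x => by simpa using hC x) hneg h1
      filter_upwards [measure_eq_zero_iff_ae_notMem.1 z1, measure_eq_zero_iff_ae_notMem.1 z2] with x a b
      exact fun _ => ⟨a, b⟩
    · filter_upwards with x; exact fun h => absurd h hq
  filter_upwards [key] with x hx
  rw [Metric.tendsto_atTop]
  intro δ hδ
  obtain ⟨q, hq1, hq2⟩ := exists_rat_btwn hδ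
  have hq0 : 0 < q := by exact_mod_cast hq1
  obtain ⟨h1, h2⟩ := hx q hq0
  have f1 : ∃ k : ℕ, ∀ m, k ≤ m → bS S ψ m x ≤ (q:ℝ) * m := by
    have : ¬ x ∈ Afreq S ψ (q:ℝ) := fun h => h1 ⟨q, by push_cast; linarith, h⟩
    simp only [Afreq, Set.mem_setOf_eq, not_forall, not_exists, not_and, not_lt] at this
    exact this
  have f2 : ∃ k : ℕ, ∀ m, k ≤ m → -((q:ℝ) * m) ≤ bS S ψ m x := by
    have : ¬ x ∈ Afreq S (fun y => -ψ y) (q:ℝ) := fun h => h2 ⟨q, by push_cast; linarith, h⟩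
    simp only [Afreq, Set.mem_setOf_eq, not_forall, not_exists, not_and, not_lt] at this
    obtain ⟨k, hk⟩ := this
    exact ⟨k, fun m hm => by have := hk m hm; rw [bS_neg] at this; linarith⟩
  obtain ⟨k₁, hk₁⟩ := f1
  obtain ⟨k₂, hk₂⟩ := f2
  refine ⟨max (max k₁ k₂) 1, fun m hm => ?_⟩
  have hm1 : 1 ≤ m := le_trans (le_max_right _ _) hm
  have hmk₁ := hk₁ m (le_trans (le_trans (le_max_left _ _) (le_max_left _ _)) hm)
  have hmk₂ := hk₂ m (le_trans (le_trans (le_max_right _ _) (le_max_left _ _)) hm)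
  have hm0 : (0:ℝ) < m := by exact_mod_cast hm1
  rw [Real.dist_eq, sub_zero, abs_div, abs_of_pos hm0, div_lt_iff₀ hm0]
  have : |bS S ψ m x| ≤ (q:ℝ) * m := abs_le.2 ⟨hmk₂, hmk₁⟩
  nlinarith

include hS hSm in
theorem invariant_iterate {c : X → ℝ}
    (hc : Measurable[MeasurableSpace.generateFrom
      {A : Set X | MeasurableSet A ∧ (S ⁻¹' A : Set X) =ᵐ[μ] A}] c) :
    ∀ᵐ x ∂μ, ∀ i : ℕ, c (S^[i] x) = c x := by
  rw [ae_all_iff]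
  intro i
  induction i with
  | zero => filter_upwards with x; simp
  | succ i ih =>
    have h1 : ∀ᵐ x ∂μ, c (S^[i] (S x)) = c (S x) := by
      rw [← hSm.map_eq] at ih
      exact (ae_map_iff hS.aemeasurable
        (measurableSet_eq_fun ((hc.mono (invAlg_le μ S) le_rfl).comp (hS.iterate i))
          (hc.mono (invAlg_le μ S) le_rfl))).1 ih
    filter_upwards [h1, invariant_fun μ S hc] with x e1 e2
    rw [Function.iterate_succ_apply, e1, e2]

include hS hSm in
/-- Birkhoff's pointwise ergodic theorem, for bounded functions,
with limit an invariant-σ-algebra measurable function with matching integrals -/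
theorem birkhoff_main {F : X → ℝ} (hFm : Measurable F) {B : ℝ} (hFB : ∀ x, |F x| ≤ B)
    {c : X → ℝ} (hcm : Measurable[MeasurableSpace.generateFrom
      {A : Set X | MeasurableSet A ∧ (S ⁻¹' A : Set X) =ᵐ[μ] A}] c)
    (hcB : ∀ x, |c x| ≤ B)
    (hcint : ∀ A : Set X, MeasurableSet A → S ⁻¹' A = A →
      ∫ x in A, F x ∂μ = ∫ x in A, c x ∂μ) :
    ∀ᵐ x ∂μ, Tendsto (fun m : ℕ =>
      (1 / (m:ℝ)) * ∑ i ∈ Finset.range m, F (S^[i] x)) atTop (nhds (c x)) := by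
  have hcm0 : Measurable c := hcm.mono (invAlg_le μ S) le_rfl
  set φ : X → ℝ := fun x => F x - c x with hφ
  have hφm : Measurable φ := hFm.sub hcm0
  have hφB : ∀ x, |φ x| ≤ B + B := fun x => (abs_sub _ _).trans (add_le_add (hFB x) (hcB x))
  have hint : ∀ A : Set X, MeasurableSet A → S ⁻¹' A = A → ∫ x in A, φ x ∂μ = 0 := by
    intro A h1 h2
    rw [hφ, integral_sub (integrable_bdd hFm hFB).integrableOn
      (integrable_bdd hcm0 hcB).integrableOn, hcint A h1 h2, sub_self]
  filter_upwards [birkhoff_bdd hS hSm hφm hφB hint, invariant_iterate hS hSm hcm] with x hx hinv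
  have key : ∀ m : ℕ, 1 ≤ m →
      (1 / (m:ℝ)) * ∑ i ∈ Finset.range m, F (S^[i] x) = c x + bS S φ m x / m := by
    intro m hm
    have hm0 : (m:ℝ) ≠ 0 := by positivity
    have : bS S φ m x = (∑ i ∈ Finset.range m, F (S^[i] x)) - m * c x := by
      calc bS S φ m x = ∑ i ∈ Finset.range m, (F (S^[i] x) - c x) :=
            Finset.sum_congr rfl fun i _ => by simp only [hφ]; rw [hinv i]
      _ = _ := by rw [Finset.sum_sub_distrib]; simp [mul_comm]
    rw [this]
    field_simp
    ring
  have h2 : Tendsto (fun m : ℕ => c x + bS S φ m x / m) atTop (nhds (c x)) := by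
    simpa using tendsto_const_nhds.add hx
  exact h2.congr' (by filter_upwards [eventually_ge_atTop 1] with m hm; exact (key m hm).symm)
end freq

/-- the invariant σ-algebra, as a plain definition (not a local instance) -/
def invSigma {X : Type*} [m0 : MeasurableSpace X] (μ : Measure X) (S : X → X) :
    MeasurableSpace X :=
  MeasurableSpace.generateFrom {A : Set X | MeasurableSet A ∧ (S ⁻¹' A : Set X) =ᵐ[μ] A}

/-- given an invertible m.p.t. (modelled as a measure-preserving
ℤ-action `T`), `F ∈ L^∞(μ)`, `a_n → ∞`, and the pointwise ergodic theorem along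
the polynomial `P`, the averages of
`| E_{i < a_n} F(Tⁱ (T^{P(n)} x)) − 𝔼_μ(F | ℐ(T))(T^{P(n)} x) |` tend to `0` a.e. -/
theorem stmt6 {X : Type*} [MeasurableSpace X] (μ : Measure X) [IsProbabilityMeasure μ]
    (T : ℤ → X → X) (hT0 : T 0 = id) (hTadd : ∀ a b : ℤ, T (a + b) = T a ∘ T b)
    (hTmeas : ∀ a : ℤ, Measurable (T a)) (hTm : ∀ a : ℤ, MeasurePreserving (T a) μ μ)
    (F : X → ℝ) (hF : MemLp F ⊤ μ)
    (a : ℕ → ℕ) (ha : Tendsto a atTop atTop)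
    (P : Polynomial ℤ)
    (hPET : ∀ h : X → ℝ, Measurable h → (∃ B : ℝ, ∀ x, |h x| ≤ B) →
      ∃ L : X → ℝ, Integrable L μ ∧
        (∀ᵐ x ∂μ, Tendsto (fun N : ℕ =>
            (1 / (N : ℝ)) * ∑ n ∈ Finset.range N, h (T (P.eval (n : ℤ)) x))
          atTop (nhds (L x))) ∧
        ∫ x, L x ∂μ = ∫ x, h x ∂μ) :
    ∀ᵐ x ∂μ, Tendsto (fun N : ℕ =>
      (1 / (N : ℝ)) * ∑ n ∈ Finset.range N,
        |(1 / (a n : ℝ)) * (∑ i ∈ Finset.range (a n), F (T (i : ℤ) (T (P.eval (n : ℤ)) x)))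
          - (μ[F | MeasurableSpace.generateFrom
              {A : Set X | MeasurableSet A ∧ (T 1 ⁻¹' A : Set X) =ᵐ[μ] (A : Set X)}])
              (T (P.eval (n : ℤ)) x)|)
      atTop (nhds 0) := by
  classical
  set S : X → X := T 1 with hSdef
  have hS : Measurable S := hTmeas 1
  have hSm : MeasurePreserving S μ μ := hTm 1
  have hIrw : MeasurableSpace.generateFrom
      {A : Set X | MeasurableSet A ∧ (S ⁻¹' A : Set X) =ᵐ[μ] (A : Set X)} = invSigma μ S := rfl
  rw [hIrw]
  -- iterates of S
  have hTiter : ∀ i : ℕ, T (i : ℤ) = S^[i] := by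
    intro i
    induction i with
    | zero => simpa using hT0
    | succ i ih =>
      have h1 : ((i + 1 : ℕ) : ℤ) = 1 + (i : ℤ) := by push_cast; ring
      rw [h1, hTadd, ih, Function.iterate_succ']
  -- the a.e. bound
  set Bnn : ℝ≥0 := (eLpNormEssSup F μ).toNNReal with hBnn
  set B : ℝ := (Bnn : ℝ) with hBdef
  have hB0 : 0 ≤ B := Bnn.coe_nonneg
  have hFae : ∀ᵐ x ∂μ, |F x| ≤ B := by
    have h1 : ∀ᵐ x ∂μ, (‖F x‖₊ : ℝ≥0∞) ≤ eLpNormEssSup F μ := ae_le_eLpNormEssSup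
    have hne : eLpNormEssSup F μ ≠ ∞ := by
      have h2 := hF.2
      rw [eLpNorm_exponent_top] at h2
      exact h2.ne
    filter_upwards [h1] with x hx
    have h3 : (‖F x‖₊ : ℝ≥0∞) ≤ (Bnn : ℝ≥0∞) := by
      rwa [hBnn, ENNReal.coe_toNNReal hne]
    have h4 : ‖F x‖₊ ≤ Bnn := by exact_mod_cast h3
    calc |F x| = ‖F x‖ := (Real.norm_eq_abs _).symm
    _ ≤ B := by exact_mod_cast h4
  -- bounded measurable version of F
  set F₁ : X → ℝ := hF.1.mk F with hF₁
  have hF₁meas : Measurable F₁ := hF.1.stronglyMeasurable_mk.measurable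
  have hF₁ae : F =ᵐ[μ] F₁ := hF.1.ae_eq_mk
  set Ft : X → ℝ := fun x => max (min (F₁ x) B) (-B) with hFt
  have hFtmeas : Measurable Ft := (hF₁meas.min measurable_const).max measurable_const
  have habs : ∀ t : ℝ, |max (min t B) (-B)| ≤ B := by
    intro t
    rw [abs_le]
    exact ⟨le_max_right _ _, max_le (min_le_right _ _) (by linarith)⟩
  have hFtbdd : ∀ x, |Ft x| ≤ B := fun x => habs _
  have hFtae : Ft =ᵐ[μ] F := by
    filter_upwards [hF₁ae, hFae] with x h1 h2
    rw [hFt]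
    simp only [← h1]
    rw [min_eq_left (abs_le.1 h2).2, max_eq_left (by linarith [(abs_le.1 h2).1])]
  -- conditional expectation
  have hI_le : invSigma μ S ≤ _ := invAlg_le μ S
  haveI : SigmaFinite (μ.trim hI_le) := by infer_instance
  have hFint : Integrable F μ := hF.integrable le_top
  set c : X → ℝ := μ[F | invSigma μ S] with hc
  have hcsm : StronglyMeasurable[invSigma μ S] c := stronglyMeasurable_condExp
  have hcae : ∀ᵐ x ∂μ, |c x| ≤ B := ae_bdd_condExp_of_ae_bdd hFae
  set ct : X → ℝ := fun x => max (min (c x) B) (-B) with hct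
  have hctmI : Measurable[invSigma μ S] ct :=
    (hcsm.measurable.min measurable_const).max measurable_const
  have hctm : Measurable ct := hctmI.mono hI_le le_rfl
  have hctbdd : ∀ x, |ct x| ≤ B := fun x => habs _
  have hctae : ct =ᵐ[μ] c := by
    filter_upwards [hcae] with x h2
    rw [hct]
    simp only []
    rw [min_eq_left (abs_le.1 h2).2, max_eq_left (by linarith [(abs_le.1 h2).1])]
  have hcint : ∀ A : Set X, MeasurableSet A → S ⁻¹' A = A →
      ∫ x in A, Ft x ∂μ = ∫ x in A, ct x ∂μ := by
    intro A hA hAinv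
    have hAI : MeasurableSet[invSigma μ S] A :=
      MeasurableSpace.measurableSet_generateFrom ⟨hA, by rw [hAinv]; exact EventuallyEq.rfl⟩
    calc ∫ x in A, Ft x ∂μ = ∫ x in A, F x ∂μ :=
          setIntegral_congr_ae hA (hFtae.mono fun x hx _ => hx)
    _ = ∫ x in A, c x ∂μ := (setIntegral_condExp hI_le hFint hAI).symm
    _ = ∫ x in A, ct x ∂μ :=
          (setIntegral_congr_ae hA (hctae.mono fun x hx _ => hx.symm))
  have hBirk : ∀ᵐ y ∂μ, Tendsto (fun m : ℕ =>
      (1 / (m:ℝ)) * ∑ i ∈ Finset.range m, Ft (S^[i] y)) atTop (nhds (ct y)) :=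
    birkhoff_main hS hSm hFtmeas hFtbdd hctmI hctbdd hcint
  -- the functions g m y = |A_m Ft(y) - ct y|
  set g : ℕ → X → ℝ :=
    fun m y => |(1 / (m:ℝ)) * ∑ i ∈ Finset.range m, Ft (S^[i] y) - ct y| with hgdef
  have hgmeas : ∀ m, Measurable (g m) := fun m =>
    (((bS_meas hS hFtmeas m).const_mul _).sub hctm).abs
  have hgbdd : ∀ m y, g m y ≤ 2 * B := by
    intro m y
    have h1 : |(1 / (m:ℝ)) * ∑ i ∈ Finset.range m, Ft (S^[i] y)| ≤ B := by
      rcases Nat.eq_zero_or_pos m with rfl | hm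
      · simpa using hB0
      · have hm0 : (0:ℝ) < m := by exact_mod_cast hm
        rw [abs_mul, abs_of_pos (by positivity : (0:ℝ) < 1/(m:ℝ))]
        have h2 : |∑ i ∈ Finset.range m, Ft (S^[i] y)| ≤ m * B := bS_bdd (S := S) hFtbdd m y
        calc (1/(m:ℝ)) * |∑ i ∈ Finset.range m, Ft (S^[i] y)| ≤ (1/(m:ℝ)) * ((m:ℝ) * B) := by
              gcongr
        _ = B := by field_simp
    calc g m y ≤ |(1 / (m:ℝ)) * ∑ i ∈ Finset.range m, Ft (S^[i] y)| + |ct y| := abs_sub _ _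
    _ ≤ B + B := add_le_add h1 (hctbdd y)
    _ = 2 * B := by ring
  -- the "uniformly small from time r on" sets
  set E : ℕ → ℕ → Set X := fun k r => {y | ∀ m, r ≤ m → g m y ≤ 1/((k:ℝ)+1)} with hEdef
  have hEmeas : ∀ k r, MeasurableSet (E k r) := by
    intro k r
    have hrw : E k r = ⋂ m, ⋂ (_ : r ≤ m), {y | g m y ≤ 1/((k:ℝ)+1)} := by
      ext y; simp [hEdef]
    rw [hrw]
    exact MeasurableSet.iInter fun m => MeasurableSet.iInter fun _ =>
      measurableSet_le (hgmeas m) measurable_const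
  have hEmono : ∀ k, Monotone (fun r => E k r) :=
    fun k r r' h y hy m hm => hy m (le_trans h hm)
  have hEcover : ∀ k, μ ((⋃ r, E k r)ᶜ) = 0 := by
    intro k
    rw [measure_eq_zero_iff_ae_notMem]
    filter_upwards [hBirk] with y hy
    rw [Set.notMem_compl_iff, Set.mem_iUnion]
    have hδ : 0 < 1/((k:ℝ)+1) := by positivity
    obtain ⟨rr, hrr⟩ := Metric.tendsto_atTop.1 hy _ hδ
    exact ⟨rr, fun m hm => le_of_lt (by simpa [hgdef, Real.dist_eq] using hrr m hm)⟩
  -- choose the ranks r k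
  have hrex : ∀ k : ℕ, ∃ r : ℕ, μ ((E k r)ᶜ) < (4 ^ (k+1) : ℝ≥0∞)⁻¹ := by
    intro k
    have h1 : Tendsto (fun r => μ ((E k r)ᶜ)) atTop (nhds (μ (⋂ r, (E k r)ᶜ))) :=
      tendsto_measure_iInter_atTop (fun r => (hEmeas k r).compl.nullMeasurableSet)
        (fun r r' h => Set.compl_subset_compl.2 (hEmono k h)) ⟨0, measure_ne_top _ _⟩
    have h2 : μ (⋂ r, (E k r)ᶜ) = 0 := by rw [← Set.compl_iUnion]; exact hEcover k
    rw [h2] at h1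
    refine (h1.eventually_lt_const ?_).exists
    simp [ENNReal.inv_pos]
  choose r hr using hrex
  -- hPET applied to the indicator functions
  have hPETapp : ∀ k : ℕ, ∃ L : X → ℝ, Integrable L μ ∧
      (∀ᵐ x ∂μ, Tendsto (fun N : ℕ => (1/(N:ℝ)) * ∑ n ∈ Finset.range N,
        ((E k (r k))ᶜ).indicator (fun _ => (1:ℝ)) (T (P.eval (n:ℤ)) x)) atTop (nhds (L x))) ∧
      ∫ x, L x ∂μ = ∫ x, ((E k (r k))ᶜ).indicator (fun _ => (1:ℝ)) x ∂μ :=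
    fun k => hPET _ (measurable_const.indicator (hEmeas k (r k)).compl)
      ⟨1, fun x => by
        by_cases hx : x ∈ (E k (r k))ᶜ <;>
          simp [Set.indicator_of_mem, Set.indicator_of_notMem, hx]⟩
  choose L hLint hLtend hLeq using hPETapp
  have hLval : ∀ k, ∫ x, L k x ∂μ ≤ ((4:ℝ)⁻¹)^(k+1) := by
    intro k
    rw [hLeq k, integral_indicator_const _ (hEmeas k (r k)).compl]
    have h1 : (μ ((E k (r k))ᶜ)).toReal ≤ ((4:ℝ)⁻¹)^(k+1) := by
      have h2 := ENNReal.toReal_mono (by simp) (hr k).le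
      refine h2.trans (le_of_eq ?_)
      rw [ENNReal.toReal_inv]
      simp [ENNReal.toReal_pow]
    simpa [measureReal_def] using h1
  have hLpos : ∀ k, 0 ≤ᵐ[μ] L k := by
    intro k
    filter_upwards [hLtend k] with x hx
    refine ge_of_tendsto hx (Eventually.of_forall fun N => ?_)
    exact mul_nonneg (by positivity) (Finset.sum_nonneg fun n _ =>
      Set.indicator_nonneg (fun _ _ => zero_le_one) _)
  -- Markov inequality
  have hmark : ∀ k, μ {x | ((2:ℝ)⁻¹)^(k+1) ≤ L k x} ≤ ((2:ℝ≥0∞)⁻¹)^(k+1) := by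
    intro k
    have h1 := mul_meas_ge_le_integral_of_nonneg (hLpos k) (hLint k) (((2:ℝ)⁻¹)^(k+1))
    have hp : (0:ℝ) < ((2:ℝ)⁻¹)^(k+1) := by positivity
    have h2 : (μ {x | ((2:ℝ)⁻¹)^(k+1) ≤ L k x}).toReal ≤ ((2:ℝ)⁻¹)^(k+1) := by
      have h3 := hLval k
      have h4 : ((4:ℝ)⁻¹)^(k+1) = ((2:ℝ)⁻¹)^(k+1) * ((2:ℝ)⁻¹)^(k+1) := by
        rw [← mul_pow]; norm_num
      rw [measureReal_def] at h1
      nlinarith [ENNReal.toReal_nonneg (a := μ {x | ((2:ℝ)⁻¹)^(k+1) ≤ L k x})]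
    calc μ {x | ((2:ℝ)⁻¹)^(k+1) ≤ L k x}
        = ENNReal.ofReal ((μ {x | ((2:ℝ)⁻¹)^(k+1) ≤ L k x}).toReal) :=
          (ENNReal.ofReal_toReal (measure_ne_top _ _)).symm
    _ ≤ ENNReal.ofReal (((2:ℝ)⁻¹)^(k+1)) := ENNReal.ofReal_le_ofReal h2
    _ = ((2:ℝ≥0∞)⁻¹)^(k+1) := by
          rw [ENNReal.ofReal_pow (by norm_num)]
          congr 1
          rw [ENNReal.ofReal_inv_of_pos (by norm_num)]
          norm_num
  have hsum : (∑' k, μ {x | ((2:ℝ)⁻¹)^(k+1) ≤ L k x}) ≠ ∞ := by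
    refine ne_top_of_le_ne_top ?_ (ENNReal.tsum_le_tsum hmark)
    have h1 : (∑' k : ℕ, ((2:ℝ≥0∞)⁻¹)^(k+1)) ≤ ∑' k : ℕ, ((2:ℝ≥0∞)⁻¹)^k :=
      ENNReal.tsum_le_tsum fun k => pow_le_pow_of_le_one (by simp) (by simp [ENNReal.inv_le_one]) (Nat.le_succ k)
    refine ne_top_of_le_ne_top ?_ h1
    rw [ENNReal.tsum_geometric]
    simp
  have hBC : ∀ᵐ x ∂μ, ∀ᶠ k in atTop, L k x < ((2:ℝ)⁻¹)^(k+1) := by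
    have h0 := measure_limsup_atTop_eq_zero hsum
    filter_upwards [measure_eq_zero_iff_ae_notMem.1 h0] with x hx
    rw [mem_limsup_iff_frequently_mem, not_frequently] at hx
    filter_upwards [hx] with k hk
    exact lt_of_not_ge fun hle => hk hle
  -- a.e. identifications along the orbit
  have hG1 : ∀ᵐ x ∂μ, ∀ n i : ℕ,
      F (T (i:ℤ) (T (P.eval (n:ℤ)) x)) = Ft (S^[i] (T (P.eval (n:ℤ)) x)) := by
    rw [ae_all_iff]
    intro n
    rw [ae_all_iff]
    intro i
    have hnull : μ {y | ¬ (F y = Ft y)} = 0 := ae_iff.1 (hFtae.mono fun y h => h.symm)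
    have h0 : μ ((T ((i:ℤ) + P.eval (n:ℤ))) ⁻¹' {y | ¬ (F y = Ft y)}) = 0 :=
      (hTm _).quasiMeasurePreserving.preimage_null hnull
    filter_upwards [measure_eq_zero_iff_ae_notMem.1 h0] with x hx
    have hcomp : T (i:ℤ) (T (P.eval (n:ℤ)) x) = T ((i:ℤ) + P.eval (n:ℤ)) x := by
      rw [hTadd]; rfl
    rw [← Function.comp_apply (f := S^[i]), ← hTiter i, hcomp]
    simpa [hcomp, Set.mem_preimage, Set.mem_setOf_eq, not_not] using hx
  have hG2 : ∀ᵐ x ∂μ, ∀ n : ℕ, c (T (P.eval (n:ℤ)) x) = ct (T (P.eval (n:ℤ)) x) := by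
    rw [ae_all_iff]
    intro n
    have hnull : μ {y | ¬ (c y = ct y)} = 0 := ae_iff.1 (hctae.mono fun y h => h.symm)
    have h0 : μ ((T (P.eval (n:ℤ))) ⁻¹' {y | ¬ (c y = ct y)}) = 0 :=
      (hTm _).quasiMeasurePreserving.preimage_null hnull
    filter_upwards [measure_eq_zero_iff_ae_notMem.1 h0] with x hx
    simpa [Set.mem_preimage, Set.mem_setOf_eq, not_not] using hx
  -- final pointwise argument
  filter_upwards [hG1, hG2, ae_all_iff.2 hLtend, hBC] with x hx1 hx2 hx3 hx4
  have hsummand : ∀ n : ℕ,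
      |(1 / (a n : ℝ)) * (∑ i ∈ Finset.range (a n), F (T (i : ℤ) (T (P.eval (n : ℤ)) x)))
        - c (T (P.eval (n : ℤ)) x)| = g (a n) (T (P.eval (n:ℤ)) x) := by
    intro n
    rw [hgdef]
    simp only []
    rw [Finset.sum_congr rfl fun i _ => hx1 n i, hx2 n]
  simp only [hsummand]
  rw [show (0:ℝ) = 0 from rfl]
  refine tendsto_order.2 ⟨fun b hb => ?_, fun δ hδ => ?_⟩
  · refine Eventually.of_forall fun N => lt_of_lt_of_le hb ?_
    exact mul_nonneg (by positivity) (Finset.sum_nonneg fun n _ => abs_nonneg _)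
  · -- choose k
    have e1 : Tendsto (fun k : ℕ => 1/((k:ℝ)+1)) atTop (nhds 0) :=
      tendsto_one_div_add_atTop_nhds_zero_nat
    have e2 : Tendsto (fun k : ℕ => 2*B*((2:ℝ)⁻¹)^(k+1)) atTop (nhds 0) := by
      have h1 : Tendsto (fun k : ℕ => ((2:ℝ)⁻¹)^(k+1)) atTop (nhds 0) :=
        (tendsto_pow_atTop_nhds_zero_of_lt_one (by norm_num) (by norm_num)).comp
          (tendsto_add_atTop_nat 1)
      simpa using h1.const_mul (2*B)
    have e3 : Tendsto (fun k : ℕ => 1/((k:ℝ)+1) + 2*B*((2:ℝ)⁻¹)^(k+1)) atTop (nhds 0) := by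
      simpa using e1.add e2
    obtain ⟨k, hk1, hk2⟩ :=
      ((e3.eventually_lt_const (half_pos hδ)).and hx4).exists
    -- choose n₀
    obtain ⟨n₀, hn₀⟩ := eventually_atTop.1 (ha.eventually_ge_atTop (r k))
    set y : ℕ → X := fun n => T (P.eval (n:ℤ)) x with hy
    set hInd : X → ℝ := ((E k (r k))ᶜ).indicator (fun _ => (1:ℝ)) with hInddef
    have hIndnn : ∀ z, 0 ≤ hInd z := fun z => Set.indicator_nonneg (fun _ _ => zero_le_one) _
    have hpt : ∀ n : ℕ, g (a n) (y n) ≤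
        1/((k:ℝ)+1) + 2*B * hInd (y n) + 2*B * (if n < n₀ then (1:ℝ) else 0) := by
      intro n
      have hnn1 : 0 ≤ 2*B * hInd (y n) := mul_nonneg (by linarith) (hIndnn _)
      have hnn2 : 0 ≤ (if n < n₀ then (1:ℝ) else 0) := by positivity
      have hnn3 : 0 ≤ 1/((k:ℝ)+1) := by positivity
      rcases lt_or_ge n n₀ with hn | hn
      · have := hgbdd (a n) (y n)
        simp only [if_pos hn]
        nlinarith
      · by_cases hmem : y n ∈ E k (r k)
        · have h1 : g (a n) (y n) ≤ 1/((k:ℝ)+1) := hmem (a n) (hn₀ n hn)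
          have h2 : 0 ≤ 2*B * (if n < n₀ then (1:ℝ) else 0) := by positivity
          linarith
        · have h1 : hInd (y n) = 1 := Set.indicator_of_mem (Set.mem_compl hmem) _
          have := hgbdd (a n) (y n)
          have h2 : 0 ≤ 2*B * (if n < n₀ then (1:ℝ) else 0) := by positivity
          rw [h1]
          linarith
    set v : ℕ → ℝ := fun N => (1/(N:ℝ)) * ∑ n ∈ Finset.range N, hInd (y n) with hv
    set w : ℕ → ℝ := fun N =>
      (1/(N:ℝ)) * ∑ n ∈ Finset.range N, (if n < n₀ then (1:ℝ) else 0) with hw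
    have havg : ∀ N : ℕ, 1 ≤ N → (1/(N:ℝ)) * ∑ n ∈ Finset.range N, g (a n) (y n) ≤
        1/((k:ℝ)+1) + 2*B * v N + 2*B * w N := by
      intro N hN
      have hN0 : (0:ℝ) < N := by exact_mod_cast hN
      have h1 : ∑ n ∈ Finset.range N, g (a n) (y n) ≤
          ∑ n ∈ Finset.range N, (1/((k:ℝ)+1) + 2*B * hInd (y n) +
            2*B * (if n < n₀ then (1:ℝ) else 0)) :=
        Finset.sum_le_sum fun n _ => hpt n
      have h2 : (1/(N:ℝ)) * ∑ n ∈ Finset.range N, g (a n) (y n) ≤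
          (1/(N:ℝ)) * ∑ n ∈ Finset.range N, (1/((k:ℝ)+1) + 2*B * hInd (y n) +
            2*B * (if n < n₀ then (1:ℝ) else 0)) := by
        apply mul_le_mul_of_nonneg_left h1 (by positivity)
      refine h2.trans (le_of_eq ?_)
      rw [Finset.sum_add_distrib, Finset.sum_add_distrib, Finset.sum_const,
        Finset.card_range, ← Finset.mul_sum, ← Finset.mul_sum]
      rw [hv, hw]
      field_simp
      have hk : (1:ℝ) + k ≠ 0 := by positivity
      have hkk := mul_inv_cancel₀ hk
      linear_combination (N:ℝ) * hkk
    have hvlim : Tendsto v atTop (nhds (L k x)) := hx3 k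
    have hwlim : Tendsto w atTop (nhds 0) := by
      have h1 : Tendsto (fun n : ℕ => (if n < n₀ then (1:ℝ) else 0)) atTop (nhds 0) := by
        refine Tendsto.congr' ?_ tendsto_const_nhds
        filter_upwards [eventually_ge_atTop n₀] with n hn
        simp [Nat.not_lt.2 hn]
      have h2 := h1.cesaro
      refine h2.congr fun N => ?_
      simp [hw, smul_eq_mul, one_div]
    have hev1 : ∀ᶠ N in atTop, v N < ((2:ℝ)⁻¹)^(k+1) := hvlim.eventually_lt_const hk2
    have hev2 : ∀ᶠ N in atTop, 2*B*(w N) < δ/2 := by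
      have h3 := hwlim.const_mul (2*B)
      rw [mul_zero] at h3
      exact h3.eventually_lt_const (half_pos hδ)
    filter_upwards [hev1, hev2, eventually_ge_atTop 1] with N h1 h2 h3
    have h4 := havg N h3
    have h5 : 2*B * v N ≤ 2*B*((2:ℝ)⁻¹)^(k+1) :=
      mul_le_mul_of_nonneg_left h1.le (by linarith)
    linarith
end

section
/- Let (X, 𝒳, μ, (S^t)_{t∈ℝ}) be a measurable flow, and for each k let δ_k > 0 with δ_k → 0 and δ_k / δ_{k+1} ∈ ℕ. Let ℐ(S^{δ_k}) be the invariant σ-algebra of the single transformation S^{δ_k}, and define ℐ(S_∞) = ⋂_k ℐ(S^{δ_k}). Assume moreover there is a dense subset 𝒜 of L²(μ) such that for every g ∈ 𝒜, t ↦ g(S^t x) is equicontinuous at t = 0 uniformly on a full-measure invariant set. Then ℐ(S_∞) = ℐ((S^t)_{t∈ℝ}) modulo μ, where ℐ((S^t)_{t∈ℝ}) is the σ-algebra generated by the sets invariant under all S^t. -/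
open MeasureTheory Filter

/-- A measurable flow: a jointly measurable one-parameter group of
measure-preserving transformations. -/
structure IsMeasurableFlow {X : Type*} [MeasurableSpace X] (μ : Measure X)
    (T : ℝ → X → X) : Prop where
  measurable : Measurable fun p : ℝ × X => T p.1 p.2
  map_zero : T 0 = id
  map_add : ∀ s t : ℝ, T (s + t) = T s ∘ T t
  measurePreserving : ∀ t : ℝ, MeasurePreserving (T t) μ μ

/-- The σ-algebra generated by the sets invariant (mod `μ`) under a single
transformation. -/
def invSigmaOne {X : Type*} [MeasurableSpace X] (μ : Measure X) (T : X → X) :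
    MeasurableSpace X :=
  MeasurableSpace.generateFrom
    {A : Set X | MeasurableSet A ∧ (T ⁻¹' A : Set X) =ᵐ[μ] (A : Set X)}

/-- The σ-algebra generated by the sets invariant (mod `μ`) under every time of
a flow. -/
def invSigmaFlow {X : Type*} [MeasurableSpace X] (μ : Measure X) (S : ℝ → X → X) :
    MeasurableSpace X :=
  MeasurableSpace.generateFrom
    {A : Set X | MeasurableSet A ∧ ∀ t : ℝ, (S t ⁻¹' A : Set X) =ᵐ[μ] (A : Set X)}

open scoped ENNReal NNReal

/- Auxiliary lemmas -/

lemma invOne_iff {X : Type*} [MeasurableSpace X] (μ : Measure X) (T : X → X) {A : Set X} :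
    MeasurableSet[invSigmaOne μ T] A ↔ MeasurableSet A ∧ (T ⁻¹' A : Set X) =ᵐ[μ] A := by
  constructor
  · intro h
    let m' : MeasurableSpace X :=
      { MeasurableSet' := fun A => MeasurableSet A ∧ (T ⁻¹' A : Set X) =ᵐ[μ] A
        measurableSet_empty := ⟨MeasurableSet.empty, by simp⟩
        measurableSet_compl := fun s hs =>
          ⟨hs.1.compl, by rw [Set.preimage_compl]; exact ae_eq_set_compl_compl.mpr hs.2⟩
        measurableSet_iUnion := fun s hs =>
          ⟨MeasurableSet.iUnion fun i => (hs i).1, by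
            rw [Set.preimage_iUnion]
            exact EventuallyEq.countable_iUnion fun i => (hs i).2⟩ }
    exact MeasurableSpace.generateFrom_le (m := m') (fun s hs => hs) _ h
  · exact fun h => MeasurableSpace.measurableSet_generateFrom h

lemma flow_inv_add {X : Type*} [MeasurableSpace X] {μ : Measure X} {S : ℝ → X → X}
    (hS : IsMeasurableFlow μ S) {A : Set X} {a b : ℝ}
    (ha : S a ⁻¹' A =ᵐ[μ] A) (hb : S b ⁻¹' A =ᵐ[μ] A) :
    S (a + b) ⁻¹' A =ᵐ[μ] A := by
  rw [hS.map_add, Set.preimage_comp]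
  exact ((hS.measurePreserving b).quasiMeasurePreserving.preimage_ae_eq ha).trans hb

lemma flow_inv_neg {X : Type*} [MeasurableSpace X] {μ : Measure X} {S : ℝ → X → X}
    (hS : IsMeasurableFlow μ S) {A : Set X} {a : ℝ}
    (ha : S a ⁻¹' A =ᵐ[μ] A) : S (-a) ⁻¹' A =ᵐ[μ] A := by
  have h := (hS.measurePreserving (-a)).quasiMeasurePreserving.preimage_ae_eq ha
  have heq : S (-a) ⁻¹' (S a ⁻¹' A) = A := by
    rw [← Set.preimage_comp, ← hS.map_add, add_neg_cancel, hS.map_zero, Set.preimage_id]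
  rw [heq] at h
  exact h.symm

lemma flow_inv_int {X : Type*} [MeasurableSpace X] {μ : Measure X} {S : ℝ → X → X}
    (hS : IsMeasurableFlow μ S) {A : Set X} {d : ℝ}
    (hd : S d ⁻¹' A =ᵐ[μ] A) (n : ℤ) : S ((n : ℝ) * d) ⁻¹' A =ᵐ[μ] A := by
  induction n using Int.induction_on with
  | zero => simp [hS.map_zero]; rfl
  | succ n ih =>
      have h : ((n + 1 : ℤ) : ℝ) * d = (n : ℝ) * d + d := by push_cast; ring
      rw [h]; exact flow_inv_add hS ih hd
  | pred n ih =>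
      have h : ((-n - 1 : ℤ) : ℝ) * d = ((-n : ℤ) : ℝ) * d + -d := by push_cast; ring
      rw [h]; exact flow_inv_add hS ih (flow_inv_neg hS hd)

/-- Continuity in measure at time `0`, in the `L²` norm, from the
equicontinuity + density hypotheses. -/
lemma l2_cont {X : Type*} [MeasurableSpace X] {μ : Measure X} [IsProbabilityMeasure μ]
    (S : ℝ → X → X) (hSm : ∀ t, MeasurePreserving (S t) μ μ)
    (𝒜 : Set (X → ℝ)) (h𝒜L2 : ∀ g ∈ 𝒜, MemLp g 2 μ)
    (hdense : ∀ f : X → ℝ, MemLp f 2 μ → ∀ ε > 0,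
      ∃ g ∈ 𝒜, eLpNorm (f - g) 2 μ ≤ ENNReal.ofReal ε)
    (X₀ : Set X) (hX₀ : μ X₀ᶜ = 0)
    (hequi : ∀ g ∈ 𝒜, ∀ ε > 0, ∃ η > 0, ∀ x ∈ X₀, ∀ t : ℝ, |t| < η →
      |g (S t x) - g x| < ε)
    (f : X → ℝ) (hf : MemLp f 2 μ) (ε : ℝ) (hε : 0 < ε) :
    ∃ η > 0, ∀ c : ℝ, |c| < η →
      eLpNorm (f ∘ S c - f) 2 μ ≤ ENNReal.ofReal ε + ENNReal.ofReal ε + ENNReal.ofReal ε := by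
  obtain ⟨g, hg𝒜, hfg⟩ := hdense f hf ε hε
  obtain ⟨η, hη, hgequi⟩ := hequi g hg𝒜 ε hε
  refine ⟨η, hη, fun c hc => ?_⟩
  have hgL2 := h𝒜L2 g hg𝒜
  have hqmp := (hSm c).quasiMeasurePreserving
  have h1m : AEStronglyMeasurable ((f - g) ∘ S c) μ :=
    (hf.sub hgL2).aestronglyMeasurable.comp_quasiMeasurePreserving hqmp
  have h2m : AEStronglyMeasurable (g ∘ S c - g) μ :=
    (hgL2.aestronglyMeasurable.comp_quasiMeasurePreserving hqmp).sub hgL2.aestronglyMeasurable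
  have h3m : AEStronglyMeasurable (g - f) μ :=
    hgL2.aestronglyMeasurable.sub hf.aestronglyMeasurable
  have hsplit : f ∘ S c - f = ((f - g) ∘ S c) + ((g ∘ S c - g) + (g - f)) := by
    funext x; simp only [Function.comp_apply, Pi.add_apply, Pi.sub_apply]; ring
  rw [hsplit]
  refine (eLpNorm_add_le h1m (h2m.add h3m) one_le_two).trans ?_
  have e1 : eLpNorm ((f - g) ∘ S c) 2 μ ≤ ENNReal.ofReal ε := by
    rw [eLpNorm_comp_measurePreserving (hf.sub hgL2).aestronglyMeasurable (hSm c)]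
    exact hfg
  have e2 : eLpNorm (g ∘ S c - g) 2 μ ≤ ENNReal.ofReal ε := by
    have hb : ∀ᵐ x ∂μ, ‖(g ∘ S c - g) x‖ ≤ ε := by
      have hX₀ae : ∀ᵐ x ∂μ, x ∈ X₀ := by
        rw [ae_iff]; exact hX₀
      filter_upwards [hX₀ae] with x hx
      simpa [Function.comp, Real.norm_eq_abs] using (hgequi x hx c hc).le
    calc eLpNorm (g ∘ S c - g) 2 μ ≤ μ Set.univ ^ (2 : ℝ≥0∞).toReal⁻¹ * ENNReal.ofReal ε :=
          eLpNorm_le_of_ae_bound hb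
      _ = ENNReal.ofReal ε := by simp
  have e3 : eLpNorm (g - f) 2 μ ≤ ENNReal.ofReal ε := by
    rw [eLpNorm_sub_comm]; exact hfg
  calc eLpNorm ((f - g) ∘ S c) 2 μ + eLpNorm ((g ∘ S c - g) + (g - f)) 2 μ
      ≤ eLpNorm ((f - g) ∘ S c) 2 μ + (eLpNorm (g ∘ S c - g) 2 μ + eLpNorm (g - f) 2 μ) :=
        add_le_add le_rfl (eLpNorm_add_le h2m h3m one_le_two)
    _ ≤ ENNReal.ofReal ε + (ENNReal.ofReal ε + ENNReal.ofReal ε) :=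
        add_le_add e1 (add_le_add e2 e3)
    _ = _ := by ring

/-- Every set invariant mod `μ` under all the `S (δ k)` is invariant mod `μ`
under every time of the flow. -/
lemma flow_inv_all {X : Type*} [MeasurableSpace X] {μ : Measure X} [IsProbabilityMeasure μ]
    {S : ℝ → X → X} (hS : IsMeasurableFlow μ S)
    (δ : ℕ → ℝ) (hδpos : ∀ k, 0 < δ k) (hδ0 : Tendsto δ atTop (nhds 0))
    (𝒜 : Set (X → ℝ)) (h𝒜L2 : ∀ g ∈ 𝒜, MemLp g 2 μ)
    (hdense : ∀ f : X → ℝ, MemLp f 2 μ → ∀ ε > 0,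
      ∃ g ∈ 𝒜, eLpNorm (f - g) 2 μ ≤ ENNReal.ofReal ε)
    (X₀ : Set X) (hX₀ : μ X₀ᶜ = 0)
    (hequi : ∀ g ∈ 𝒜, ∀ ε > 0, ∃ η > 0, ∀ x ∈ X₀, ∀ t : ℝ, |t| < η →
      |g (S t x) - g x| < ε)
    {A : Set X} (hAm : MeasurableSet A) (hAinv : ∀ k, S (δ k) ⁻¹' A =ᵐ[μ] A)
    (t : ℝ) : S t ⁻¹' A =ᵐ[μ] A := by
  set f : X → ℝ := A.indicator 1 with hfdef
  have hf : MemLp f 2 μ := memLp_indicator_const 2 hAm 1 (Or.inr (measure_ne_top μ A))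
  have hpre : MeasurableSet (S t ⁻¹' A) := (hS.measurePreserving t).measurable hAm
  have key : eLpNorm ((S t ⁻¹' A).indicator (1 : X → ℝ) - f) 2 μ = 0 := by
    refine le_antisymm (ENNReal.le_of_forall_pos_le_add fun ε hε _ => ?_) (zero_le)
    rw [zero_add]
    have hε3 : 0 < (ε : ℝ) / 3 := by positivity
    obtain ⟨η, hη, hcont⟩ := l2_cont S hS.measurePreserving 𝒜 h𝒜L2 hdense X₀ hX₀ hequi
      f hf ((ε : ℝ) / 3) hε3
    obtain ⟨k, hk⟩ := (hδ0.eventually_lt_const hη).exists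
    set n : ℤ := ⌊t / δ k⌋ with hndef
    set c : ℝ := t - (n : ℝ) * δ k with hcdef
    have hc0 : 0 ≤ c := by
      have h1 : (n : ℝ) ≤ t / δ k := Int.floor_le _
      have h2 : (n : ℝ) * δ k ≤ t := (le_div_iff₀ (hδpos k)).1 h1
      simp [hcdef]; linarith
    have hcδ : c < δ k := by
      have h1 : t / δ k < (n : ℝ) + 1 := Int.lt_floor_add_one _
      have h2 : t < ((n : ℝ) + 1) * δ k := (div_lt_iff₀ (hδpos k)).1 h1
      simp only [hcdef]; nlinarith
    have habs : |c| < η := by rw [abs_of_nonneg hc0]; linarith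
    have hteq : S t ⁻¹' A =ᵐ[μ] S c ⁻¹' A := by
      have h1 : S t ⁻¹' A = S c ⁻¹' (S ((n : ℝ) * δ k) ⁻¹' A) := by
        rw [← Set.preimage_comp, ← hS.map_add]
        congr 1
        congr 1
        simp only [hcdef]; ring
      rw [h1]
      exact (hS.measurePreserving c).quasiMeasurePreserving.preimage_ae_eq
        (flow_inv_int hS (hAinv k) n)
    have hcomp : (S c ⁻¹' A).indicator (1 : X → ℝ) = f ∘ S c := by
      ext x; by_cases h : S c x ∈ A <;> simp [hfdef, Set.indicator, h]
    have hE : eLpNorm ((S t ⁻¹' A).indicator (1 : X → ℝ) - f) 2 μ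
        = eLpNorm (f ∘ S c - f) 2 μ := by
      refine eLpNorm_congr_ae ?_
      rw [← hcomp]
      exact (indicator_ae_eq_of_ae_eq_set hteq).sub (EventuallyEq.refl _ _)
    rw [hE]
    refine (hcont c habs).trans ?_
    have h3 : ENNReal.ofReal ((ε : ℝ) / 3) + ENNReal.ofReal ((ε : ℝ) / 3)
        + ENNReal.ofReal ((ε : ℝ) / 3) = ENNReal.ofReal (ε : ℝ) := by
      rw [← ENNReal.ofReal_add (by positivity) (by positivity),
        ← ENNReal.ofReal_add (by positivity) (by positivity)]
      ring_nf
    rw [h3, ENNReal.ofReal_coe_nnreal]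
  have hsub : (S t ⁻¹' A).indicator (1 : X → ℝ) =ᵐ[μ] f := by
    have hm : AEStronglyMeasurable ((S t ⁻¹' A).indicator (1 : X → ℝ) - f) μ :=
      ((stronglyMeasurable_const.indicator hpre).aestronglyMeasurable).sub
        ((stronglyMeasurable_const.indicator hAm).aestronglyMeasurable)
    have := (eLpNorm_eq_zero_iff hm (by norm_num : (2 : ℝ≥0∞) ≠ 0)).1 key
    exact (sub_ae_eq_zero _ _).1 this
  rw [eventuallyEq_set]
  filter_upwards [hsub] with x hx
  constructor <;> intro hm <;> by_contra hm' <;>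
    simp [hfdef, Set.indicator_apply, hm, hm'] at hx

/-- `ℐ(S_∞) = ⋂_k ℐ(S^{δ_k})` coincides mod `μ` with the invariant
σ-algebra of the whole flow, under the equicontinuity hypothesis available for
topological models. -/
theorem stmt10 {X : Type*} [MeasurableSpace X] (μ : Measure X) [IsProbabilityMeasure μ]
    (S : ℝ → X → X) (hS : IsMeasurableFlow μ S)
    (δ : ℕ → ℝ) (hδpos : ∀ k, 0 < δ k) (hδ0 : Tendsto δ atTop (nhds 0))
    (hdiv : ∀ k, ∃ m : ℕ, δ k = (m : ℝ) * δ (k + 1))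
    (𝒜 : Set (X → ℝ)) (h𝒜L2 : ∀ g ∈ 𝒜, MemLp g 2 μ)
    (hdense : ∀ f : X → ℝ, MemLp f 2 μ → ∀ ε > 0,
      ∃ g ∈ 𝒜, eLpNorm (f - g) 2 μ ≤ ENNReal.ofReal ε)
    (X₀ : Set X) (hX₀ : μ X₀ᶜ = 0) (hX₀inv : ∀ t : ℝ, S t ⁻¹' X₀ = X₀)
    (hequi : ∀ g ∈ 𝒜, ∀ ε > 0, ∃ η > 0, ∀ x ∈ X₀, ∀ t : ℝ, |t| < η →
      |g (S t x) - g x| < ε) :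
    (∀ A : Set X, MeasurableSet[⨅ k : ℕ, invSigmaOne μ (S (δ k))] A →
      ∃ B : Set X, MeasurableSet[invSigmaFlow μ S] B ∧ (A : Set X) =ᵐ[μ] B) ∧
    (∀ B : Set X, MeasurableSet[invSigmaFlow μ S] B →
      ∃ A : Set X, MeasurableSet[⨅ k : ℕ, invSigmaOne μ (S (δ k))] A ∧
        (B : Set X) =ᵐ[μ] A) := by
  constructor
  · intro A hA
    rw [MeasurableSpace.measurableSet_iInf] at hA
    have hA' : ∀ k, MeasurableSet A ∧ S (δ k) ⁻¹' A =ᵐ[μ] A :=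
      fun k => (invOne_iff μ (S (δ k))).1 (hA k)
    have hAm : MeasurableSet A := (hA' 0).1
    have hinv : ∀ t : ℝ, S t ⁻¹' A =ᵐ[μ] A :=
      flow_inv_all hS δ hδpos hδ0 𝒜 h𝒜L2 hdense X₀ hX₀ hequi hAm (fun k => (hA' k).2)
    exact ⟨A, MeasurableSpace.measurableSet_generateFrom ⟨hAm, hinv⟩, EventuallyEq.refl _ _⟩
  · intro B hB
    have hle : invSigmaFlow μ S ≤ ⨅ k : ℕ, invSigmaOne μ (S (δ k)) := by
      refine MeasurableSpace.generateFrom_le fun s hs => ?_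
      rw [MeasurableSpace.measurableSet_iInf]
      exact fun k => MeasurableSpace.measurableSet_generateFrom ⟨hs.1, hs.2 (δ k)⟩
    exact ⟨B, hle _ hB, EventuallyEq.refl _ _⟩
end
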